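/- arXiv:2407.00479 — 5 statements merged into one kernel-verified Lean document; each statement's English description precedes it below -/
import Mathlib

section
/- Let A be a subset of B that is closed, monotone, and quasidense. Then A is maximally monotone. -/
open NormedSpace

noncomputable section

variable (E : Type*) [NormedAddCommGroup E] [NormedSpace ℝ E]

/-- `B = E × E*`. -/
abbrev BSp := E × StrongDual ℝ E

/-- `B* = E* × E**`. -/
abbrev BStar := StrongDual ℝ E × StrongDual ℝ (StrongDual ℝ E)

/-- `q(x, x*) = ⟨x, x*⟩`. -/
def qB (b : BSp E) : ℝ := b.2 b.1

/-- `r(b) = ½‖b‖² + q(b)`, where `‖(x,x*)‖² = ‖x‖² + ‖x*‖²`. -/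
def rB (b : BSp E) : ℝ := (‖b.1‖ ^ 2 + ‖b.2‖ ^ 2) / 2 + qB E b

/-- `q̃(y*, y**) = ⟨y*, y**⟩`. -/
def qS (p : BStar E) : ℝ := p.2 p.1

/-- `r̃(b*) = ½‖b*‖² + q̃(b*)`. -/
def rS (p : BStar E) : ℝ := (‖p.1‖ ^ 2 + ‖p.2‖ ^ 2) / 2 + qS E p

/-- The isometry `L(y, y*) = (y*, ŷ)`. -/
def LMap (b : BSp E) : BStar E := (b.2, inclusionInDoubleDual ℝ E b.1)

/-- A subset of `B` is monotone. -/
def IsMonot (A : Set (BSp E)) : Prop := ∀ d ∈ A, ∀ e ∈ A, 0 ≤ qB E (d - e)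

/-- A subset of `B` is maximally monotone. -/
def IsMaxMonot (A : Set (BSp E)) : Prop :=
  IsMonot E A ∧ ∀ A' : Set (BSp E), IsMonot E A' → A ⊆ A' → A' = A

/-- A subset of `B*` is monotone. -/
def IsMonotStar (N : Set (BStar E)) : Prop := ∀ d ∈ N, ∀ e ∈ N, 0 ≤ qS E (d - e)

/-- A subset of `B*` is maximally monotone. -/
def IsMaxMonotStar (N : Set (BStar E)) : Prop :=
  IsMonotStar E N ∧ ∀ N' : Set (BStar E), IsMonotStar E N' → N ⊆ N' → N' = N

/-- `A` is quasidense: `inf_{a ∈ A} r(a - b) = 0` for every `b ∈ B`. -/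
def Quasidense (A : Set (BSp E)) : Prop :=
  ∀ b : BSp E, (⨅ a ∈ A, (rB E (a - b) : EReal)) = 0

/-- `P_M(b) = −inf_{m ∈ M} q(m − b)`, an extended real. -/
def PFn (M : Set (BSp E)) (b : BSp E) : EReal := -(⨅ m ∈ M, (qB E (m - b) : EReal))

/-- `F_M(b*) = −inf_{b ∈ B} [P_M(b) + q̃(b* − Lb)]`. -/
def FFn (M : Set (BSp E)) (p : BStar E) : EReal :=
  -(⨅ b : BSp E, (PFn E M b + (qS E (p - LMap E b) : EReal)))

/-- `G_M(b*) = −inf_{m ∈ M} q̃(Lm − b*)`. -/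
def GFn (M : Set (BSp E)) (p : BStar E) : EReal :=
  -(⨅ m ∈ M, (qS E (LMap E m - p) : EReal))

/-- The Gossez extension `M^♯ = {b* : G_M(b*) ≤ 0}`. -/
def Sharp (M : Set (BSp E)) : Set (BStar E) := {p | GFn E M p ≤ 0}

/-- `M` is of type (NI): `G_M ≥ 0` on `B*`. -/
def TypeNI (M : Set (BSp E)) : Prop := ∀ p : BStar E, 0 ≤ GFn E M p

variable [CompleteSpace E] [Nontrivial E]

/-- A closed, monotone, quasidense subset of `B` is maximally monotone. -/
theorem closed_monotone_quasidense_isMaxMonot (A : Set (BSp E))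
    (hclosed : IsClosed A) (hmono : IsMonot E A) (hqd : Quasidense E A) :
    IsMaxMonot E A := by
  refine ⟨hmono, fun A' hA' hsub => Set.Subset.antisymm (fun b hb => ?_) hsub⟩
  rw [← hclosed.closure_eq, Metric.mem_closure_iff]
  intro ε hε
  have key : ∃ a ∈ A, rB E (a - b) < ε ^ 2 / 2 := by
    by_contra h
    push_neg at h
    have hle : ((ε ^ 2 / 2 : ℝ) : EReal) ≤ ⨅ a ∈ A, (rB E (a - b) : EReal) :=
      le_iInf₂ fun a ha => EReal.coe_le_coe_iff.2 (h a ha)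
    rw [hqd b] at hle
    have h2 : ε ^ 2 / 2 ≤ 0 := EReal.coe_le_coe_iff.1 (by rwa [← EReal.coe_zero] at hle)
    have : (0:ℝ) < ε ^ 2 / 2 := by positivity
    linarith
  obtain ⟨a, ha, hr⟩ := key
  have hq : 0 ≤ qB E (a - b) := hA' a (hsub ha) b hb
  simp only [rB] at hr
  have h1 : ‖(a - b).1‖ ^ 2 < ε ^ 2 := by nlinarith [sq_nonneg ‖(a - b).2‖]
  have h2 : ‖(a - b).2‖ ^ 2 < ε ^ 2 := by nlinarith [sq_nonneg ‖(a - b).1‖]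
  refine ⟨a, ha, ?_⟩
  have hd : dist b a = max ‖(a - b).1‖ ‖(a - b).2‖ := by
    rw [dist_eq_norm, Prod.norm_def, ← norm_neg (b - a).1, ← norm_neg (b - a).2]
    simp [Prod.fst_sub, Prod.snd_sub, neg_sub]
  rw [hd]
  exact max_lt (lt_of_pow_lt_pow_left₀ 2 hε.le h1) (lt_of_pow_lt_pow_left₀ 2 hε.le h2)
end
end

section
/- Let M be a maximally monotone subset of B and suppose that (P_M □ r)(b) ≤ 0 for all b ∈ B. Then for every c₁ ∈ B, inf_{m ∈ M} ¼‖m − c₁‖² ≤ P_M(c₁). -/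
open NormedSpace

noncomputable section

variable (E : Type*) [NormedAddCommGroup E] [NormedSpace ℝ E]

variable [CompleteSpace E] [Nontrivial E]

/-! ### Auxiliary lemmas for Statement 1 -/

lemma qB_neg (w : BSp E) : qB E (-w) = qB E w := by
  simp [qB]

lemma qB_zero : qB E (0 : BSp E) = 0 := by
  simp [qB]

lemma qB_continuous : Continuous (qB E) := by
  show Continuous fun w : BSp E => w.2 w.1
  exact isBoundedBilinearMap_apply.continuous.comp (continuous_snd.prodMk continuous_fst)

lemma abs_qB_le (w : BSp E) : |qB E w| ≤ ‖w.2‖ * ‖w.1‖ := by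
  have := w.2.le_opNorm w.1
  calc |qB E w| = ‖w.2 w.1‖ := (Real.norm_eq_abs _).symm
  _ ≤ ‖w.2‖ * ‖w.1‖ := this

lemma rB_nonneg (b : BSp E) : 0 ≤ rB E b := by
  have h := abs_le.mp (abs_qB_le E b)
  have h2 : ‖b.2‖ * ‖b.1‖ ≤ (‖b.1‖ ^ 2 + ‖b.2‖ ^ 2) / 2 := by
    nlinarith [sq_nonneg (‖b.1‖ - ‖b.2‖)]
  unfold rB
  linarith [h.1]

/-- The key convexity-defect identity. -/
lemma qB_convex_identity (m c y : BSp E) (s : ℝ) :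
    qB E (m - (c + s • (y - c))) =
      (1 - s) * qB E (m - c) + s * qB E (m - y) - s * (1 - s) * qB E (y - c) := by
  simp only [qB, Prod.fst_sub, Prod.snd_sub, Prod.fst_add, Prod.snd_add, Prod.smul_fst,
    Prod.smul_snd, ContinuousLinearMap.sub_apply, ContinuousLinearMap.add_apply,
    ContinuousLinearMap.smul_apply, map_sub, map_add, map_smul, smul_eq_mul]
  ring

/-- A point monotonically related to a maximally monotone set belongs to it. -/
lemma mem_of_related (M : Set (BSp E)) (hM : IsMaxMonot E M) (z : BSp E)
    (hz : ∀ m ∈ M, 0 ≤ qB E (m - z)) : z ∈ M := by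
  have hmono : IsMonot E (insert z M) := by
    intro d hd e he
    rcases Set.mem_insert_iff.mp hd with hdz | hdM
    · rcases Set.mem_insert_iff.mp he with hez | heM
      · rw [hdz, hez, sub_self, qB_zero]
      · rw [hdz, show z - e = -(e - z) by abel, qB_neg]; exact hz e heM
    · rcases Set.mem_insert_iff.mp he with hez | heM
      · rw [hez]; exact hz d hdM
      · exact hM.1 d hdM e heM
  have := hM.2 (insert z M) hmono (Set.subset_insert _ _)
  rw [← this]
  exact Set.mem_insert _ _

lemma M_nonempty (M : Set (BSp E)) (hM : IsMaxMonot E M) : M.Nonempty := by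
  rcases Set.eq_empty_or_nonempty M with h | h
  · exfalso
    have hmono : IsMonot E ({0} : Set (BSp E)) := by
      intro d hd e he
      rcases hd with rfl
      rcases he with rfl
      rw [sub_self, qB_zero]
    have := hM.2 {0} hmono (by rw [h]; exact Set.empty_subset _)
    rw [h] at this
    exact Set.singleton_ne_empty _ this
  · exact h

lemma PFn_nonneg (M : Set (BSp E)) (hM : IsMaxMonot E M) (z : BSp E) : 0 ≤ PFn E M z := by
  by_contra h
  push_neg at h
  rw [PFn, EReal.neg_lt_comm, neg_zero] at h
  -- h : 0 < ⨅ m ∈ M, (qB E (m - z) : EReal)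
  have hz : ∀ m ∈ M, 0 ≤ qB E (m - z) := by
    intro m hm
    have : (0 : EReal) < (qB E (m - z) : EReal) :=
      lt_of_lt_of_le h (iInf₂_le m hm)
    exact_mod_cast this.le
  have hzM := mem_of_related E M hM z hz
  have : (⨅ m ∈ M, (qB E (m - z) : EReal)) ≤ ((qB E (z - z) : ℝ) : EReal) :=
    iInf₂_le z hzM
  rw [sub_self, qB_zero] at this
  exact absurd (lt_of_lt_of_le h this) (by simp)

/-- From the hypothesis, near any point there are points that are almost
monotonically related to `M`. -/
lemma exists_near_related (M : Set (BSp E)) (hM : IsMaxMonot E M)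
    (hconv : ∀ b : BSp E, (⨅ y : BSp E, (PFn E M y + (rB E (b - y) : EReal))) ≤ 0)
    (c : BSp E) (δ : ℝ) (hδ : 0 < δ) :
    ∃ y : BSp E, (∀ m ∈ M, -δ ≤ qB E (m - y)) ∧ rB E (c - y) ≤ δ := by
  have h0 : (⨅ y : BSp E, (PFn E M y + (rB E (c - y) : EReal))) < (δ : EReal) := by
    refine lt_of_le_of_lt (hconv c) ?_
    exact_mod_cast hδ
  obtain ⟨y, hy⟩ := iInf_lt_iff.mp h0
  have hP : (0 : EReal) ≤ PFn E M y := PFn_nonneg E M hM y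
  have hr : (0 : EReal) ≤ ((rB E (c - y) : ℝ) : EReal) := by
    exact_mod_cast rB_nonneg E (c - y)
  have h1 : PFn E M y ≤ (δ : EReal) :=
    le_trans (le_add_of_nonneg_right hr) hy.le
  have h2 : ((rB E (c - y) : ℝ) : EReal) ≤ (δ : EReal) :=
    le_trans (le_add_of_nonneg_left hP) hy.le
  refine ⟨y, ?_, by exact_mod_cast h2⟩
  intro m hm
  rw [PFn, EReal.neg_le] at h1
  have h3 : ((-δ : ℝ) : EReal) ≤ (⨅ m ∈ M, (qB E (m - y) : EReal)) := by
    rw [EReal.coe_neg]; exact h1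
  have h4 := le_trans h3 (iInf₂_le m hm)
  exact_mod_cast h4

/-- The one-step improvement lemma. -/
lemma step_lemma (M : Set (BSp E)) (hM : IsMaxMonot E M)
    (hconv : ∀ b : BSp E, (⨅ y : BSp E, (PFn E M y + (rB E (b - y) : EReal))) ≤ 0)
    (c : BSp E) (ρ δ : ℝ) (hρ : 0 < ρ) (hδ : 0 < δ)
    (hc : ∀ m ∈ M, -ρ ≤ qB E (m - c)) :
    ∃ u : BSp E, (∀ m ∈ M, -(2 * δ) ≤ qB E (m - u)) ∧
      ‖(u - c).1‖ ^ 2 + ‖(u - c).2‖ ^ 2 ≤ 2 * ρ := by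
  obtain ⟨y, hy1, hy2⟩ := exists_near_related E M hM hconv c δ hδ
  set K := ‖(c - y).1‖ ^ 2 + ‖(c - y).2‖ ^ 2 with hKdef
  have hK0 : 0 ≤ K := by positivity
  have hKyc : ‖(y - c).1‖ ^ 2 + ‖(y - c).2‖ ^ 2 = K := by
    rw [hKdef, show y - c = -(c - y) by abel, Prod.fst_neg, Prod.snd_neg, norm_neg, norm_neg]
  have hqyc : qB E (y - c) ≤ δ - K / 2 := by
    have : rB E (c - y) = K / 2 + qB E (c - y) := by rw [rB]
    rw [show y - c = -(c - y) by abel, qB_neg]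
    linarith [hy2, this]
  by_cases hcase : K ≤ 2 * ρ
  · refine ⟨y, fun m hm => le_trans (by linarith) (hy1 m hm), ?_⟩
    rw [hKyc]; exact hcase
  · push_neg at hcase
    have hKpos : 0 < K := lt_trans (by positivity) hcase
    set s := 2 * ρ / K with hsdef
    have hs0 : 0 < s := by positivity
    have hs1 : s < 1 := by rw [hsdef, div_lt_one hKpos]; linarith
    have hsK : s * K = 2 * ρ := div_mul_cancel₀ _ (ne_of_gt hKpos)
    refine ⟨c + s • (y - c), fun m hm => ?_, ?_⟩
    · rw [qB_convex_identity]
      have h1 := hc m hm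
      have h2 := hy1 m hm
      have e1 : (1 - s) * (-ρ) ≤ (1 - s) * qB E (m - c) :=
        mul_le_mul_of_nonneg_left h1 (by linarith)
      have e2 : s * (-δ) ≤ s * qB E (m - y) :=
        mul_le_mul_of_nonneg_left h2 hs0.le
      have e3 : s * (1 - s) * qB E (y - c) ≤ s * (1 - s) * (δ - K / 2) :=
        mul_le_mul_of_nonneg_left hqyc (by nlinarith)
      have e4 : s * (1 - s) * (δ - K / 2) = s * (1 - s) * δ - (1 - s) * (s * K) / 2 := by ring
      rw [hsK] at e4
      nlinarith [mul_nonneg (mul_nonneg hs0.le (by linarith : (0:ℝ) ≤ 1 - s)) hδ.le,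
        mul_nonneg hs0.le hδ.le]
    · have huc : c + s • (y - c) - c = s • (y - c) := by abel
      rw [huc, Prod.smul_fst, Prod.smul_snd, norm_smul, norm_smul, Real.norm_eq_abs,
        abs_of_pos hs0]
      have : (s * ‖(y - c).1‖) ^ 2 + (s * ‖(y - c).2‖) ^ 2 = s * (s * K) := by
        rw [← hKyc]; ring
      rw [mul_pow, mul_pow, show s ^ 2 * ‖(y - c).1‖ ^ 2 + s ^ 2 * ‖(y - c).2‖ ^ 2
        = s * (s * K) by rw [← hKyc]; ring, hsK]
      nlinarith

/-- The iteration: produces a point of `M` close to `b`. -/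
lemma exists_mem_close (M : Set (BSp E)) (hM : IsMaxMonot E M)
    (hconv : ∀ b : BSp E, (⨅ y : BSp E, (PFn E M y + (rB E (b - y) : EReal))) ≤ 0)
    (b : BSp E) (μ : ℝ) (hμ0 : 0 ≤ μ) (hμ : ∀ m ∈ M, -μ ≤ qB E (m - b))
    (η : ℝ) (hη : 0 < η) :
    ∃ p ∈ M, ‖(p - b).1‖ ≤ Real.sqrt (2 * μ + 2 * η) + 2 * Real.sqrt η ∧
      ‖(p - b).2‖ ≤ Real.sqrt (2 * μ + 2 * η) + 2 * Real.sqrt η := by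
  classical
  -- the decreasing scale
  set ρ : ℕ → ℝ := fun n => Nat.rec (μ + η) (fun k _ => 2 * η / 4 ^ (k + 1)) n with hρdef
  have hρ0 : ρ 0 = μ + η := rfl
  have hρs : ∀ k, ρ (k + 1) = 2 * η / 4 ^ (k + 1) := fun k => rfl
  have hρpos : ∀ n, 0 < ρ n := by
    intro n
    cases n with
    | zero => rw [hρ0]; linarith
    | succ k => rw [hρs]; positivity
  -- total step function via choice
  have total : ∀ (n : ℕ) (c : BSp E), ∃ u : BSp E,
      ((∀ m ∈ M, -(ρ n) ≤ qB E (m - c)) →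
        ((∀ m ∈ M, -(ρ (n + 1)) ≤ qB E (m - u)) ∧
          ‖(u - c).1‖ ^ 2 + ‖(u - c).2‖ ^ 2 ≤ 2 * ρ n)) := by
    intro n c
    by_cases hc : ∀ m ∈ M, -(ρ n) ≤ qB E (m - c)
    · obtain ⟨u, hu1, hu2⟩ := step_lemma E M hM hconv c (ρ n) (ρ (n + 1) / 2)
        (hρpos n) (by have := hρpos (n + 1); linarith) hc
      refine ⟨u, fun _ => ⟨fun m hm => ?_, hu2⟩⟩
      have := hu1 m hm
      linarith
    · exact ⟨c, fun h => absurd h hc⟩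
  choose F hF using total
  -- the sequence
  set u : ℕ → BSp E := fun n => Nat.rec b (fun k x => F k x) n with hudef
  have hu0 : u 0 = b := rfl
  have husucc : ∀ k, u (k + 1) = F k (u k) := fun k => rfl
  have hinv : ∀ n, ∀ m ∈ M, -(ρ n) ≤ qB E (m - u n) := by
    intro n
    induction n with
    | zero =>
      intro m hm
      rw [hu0, hρ0]
      have := hμ m hm
      linarith
    | succ k ih =>
      rw [husucc]
      exact (hF k (u k) ih).1
  have hstep : ∀ k, ‖(u (k + 1) - u k).1‖ ^ 2 + ‖(u (k + 1) - u k).2‖ ^ 2 ≤ 2 * ρ k := by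
    intro k
    rw [husucc]
    exact (hF k (u k) (hinv k)).2
  -- norms of steps
  have hnorm_step : ∀ k, ‖u (k + 1) - u k‖ ≤ Real.sqrt (2 * ρ k) := by
    intro k
    have h1 := hstep k
    rw [Prod.norm_def]
    have hk : 0 ≤ 2 * ρ k := by linarith [hρpos k]
    rw [max_le_iff]
    constructor
    · nlinarith [Real.sq_sqrt hk, Real.sqrt_nonneg (2 * ρ k), norm_nonneg (u (k + 1) - u k).1,
        norm_nonneg (u (k + 1) - u k).2, sq_nonneg (‖(u (k + 1) - u k).1‖ - Real.sqrt (2 * ρ k))]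
    · nlinarith [Real.sq_sqrt hk, Real.sqrt_nonneg (2 * ρ k), norm_nonneg (u (k + 1) - u k).1,
        norm_nonneg (u (k + 1) - u k).2, sq_nonneg (‖(u (k + 1) - u k).2‖ - Real.sqrt (2 * ρ k))]
  -- geometric bound from index 1 on
  have hgeom : ∀ k, dist (u (k + 1)) (u (k + 2)) ≤ Real.sqrt η * (1 / 2) ^ k := by
    intro k
    have h1 : Real.sqrt (2 * ρ (k + 1)) = Real.sqrt η * (1 / 2) ^ k := by
      have h2 : 2 * ρ (k + 1) = η * ((1 / 2 : ℝ) ^ k) ^ 2 := by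
        have h4 : ((1 / 2 : ℝ) ^ k) ^ 2 = 1 / 4 ^ k := by
          rw [← pow_mul, pow_mul']
          norm_num
          rw [one_div, inv_pow]
        have h5 : (4 : ℝ) ^ (k + 1) = 4 ^ k * 4 := by rw [pow_succ]
        have h6 : (0:ℝ) < 4 ^ k := by positivity
        rw [hρs, h4, h5]
        field_simp
        ring
      rw [h2, Real.sqrt_mul hη.le, Real.sqrt_sq (by positivity)]
    rw [dist_comm, dist_eq_norm, ← h1]
    exact hnorm_step (k + 1)
  have hcauchy : CauchySeq (fun k => u (k + 1)) :=
    cauchySeq_of_le_geometric (1 / 2) (Real.sqrt η) (by norm_num) hgeom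
  obtain ⟨p, hp⟩ := cauchySeq_tendsto_of_complete hcauchy
  -- p is monotonically related to M
  have hpM : p ∈ M := by
    apply mem_of_related E M hM
    intro m hm
    have hcont : Filter.Tendsto (fun k => qB E (m - u (k + 1))) Filter.atTop (nhds (qB E (m - p))) := by
      have h1 : Filter.Tendsto (fun k => m - u (k + 1)) Filter.atTop (nhds (m - p)) :=
        Filter.Tendsto.const_sub m hp
      exact ((qB_continuous E).tendsto _).comp h1
    have hρtend : Filter.Tendsto (fun k : ℕ => -(ρ (k + 1))) Filter.atTop (nhds 0) := by
      have h1 : Filter.Tendsto (fun k : ℕ => ((1 : ℝ) / 4) ^ k) Filter.atTop (nhds 0) :=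
        tendsto_pow_atTop_nhds_zero_of_lt_one (by norm_num) (by norm_num)
      have h2 : Filter.Tendsto (fun k : ℕ => 2 * η / 4 ^ (k + 1)) Filter.atTop (nhds 0) := by
        have h3 : ∀ k : ℕ, 2 * η / 4 ^ (k + 1) = (η / 2) * (1 / 4) ^ k := by
          intro k
          rw [pow_succ]
          field_simp
          rw [show (4:ℝ) ^ k * 4 * (1 / 4) ^ k = 4 by
            rw [mul_comm, ← mul_assoc, ← mul_pow]; norm_num]
          norm_num
        simp only [h3]
        simpa using h1.const_mul (η / 2)
      have := h2.neg
      rw [neg_zero] at this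
      exact this
    have := le_of_tendsto_of_tendsto' hρtend hcont (fun k => hinv (k + 1) m hm)
    linarith
  -- distance estimates
  have hd1 : dist (u 1) p ≤ 2 * Real.sqrt η := by
    have := dist_le_of_le_geometric_of_tendsto₀ (1 / 2) (Real.sqrt η) (by norm_num) hgeom hp
    calc dist (u 1) p ≤ Real.sqrt η / (1 - 1 / 2) := this
    _ = 2 * Real.sqrt η := by ring
  have hd0f : ‖(u 1 - b).1‖ ≤ Real.sqrt (2 * μ + 2 * η) ∧
      ‖(u 1 - b).2‖ ≤ Real.sqrt (2 * μ + 2 * η) := by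
    have h0 := hstep 0
    rw [hu0, hρ0] at h0
    have h1 : ‖(u 1 - b).1‖ ^ 2 + ‖(u 1 - b).2‖ ^ 2 ≤ 2 * (μ + η) := h0
    have hk : (0:ℝ) ≤ 2 * μ + 2 * η := by linarith
    constructor
    · nlinarith [Real.sq_sqrt hk, Real.sqrt_nonneg (2 * μ + 2 * η),
        norm_nonneg (u 1 - b).1, norm_nonneg (u 1 - b).2,
        sq_nonneg (‖(u 1 - b).1‖ - Real.sqrt (2 * μ + 2 * η))]
    · nlinarith [Real.sq_sqrt hk, Real.sqrt_nonneg (2 * μ + 2 * η),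
        norm_nonneg (u 1 - b).1, norm_nonneg (u 1 - b).2,
        sq_nonneg (‖(u 1 - b).2‖ - Real.sqrt (2 * μ + 2 * η))]
  refine ⟨p, hpM, ?_, ?_⟩
  · have h1 : (p - b).1 = (p - u 1).1 + (u 1 - b).1 := by
      rw [show p - b = (p - u 1) + (u 1 - b) by abel, Prod.fst_add]
    rw [h1]
    have h2 : ‖(p - u 1).1‖ ≤ 2 * Real.sqrt η := by
      refine le_trans (norm_fst_le _) ?_
      rw [← dist_eq_norm, dist_comm]
      exact hd1
    calc ‖(p - u 1).1 + (u 1 - b).1‖ ≤ ‖(p - u 1).1‖ + ‖(u 1 - b).1‖ := norm_add_le _ _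
    _ ≤ 2 * Real.sqrt η + Real.sqrt (2 * μ + 2 * η) := add_le_add h2 hd0f.1
    _ = Real.sqrt (2 * μ + 2 * η) + 2 * Real.sqrt η := by ring
  · have h1 : (p - b).2 = (p - u 1).2 + (u 1 - b).2 := by
      rw [show p - b = (p - u 1) + (u 1 - b) by abel, Prod.snd_add]
    rw [h1]
    have h2 : ‖(p - u 1).2‖ ≤ 2 * Real.sqrt η := by
      refine le_trans (norm_snd_le _) ?_
      rw [← dist_eq_norm, dist_comm]
      exact hd1
    calc ‖(p - u 1).2 + (u 1 - b).2‖ ≤ ‖(p - u 1).2‖ + ‖(u 1 - b).2‖ := norm_add_le _ _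
    _ ≤ 2 * Real.sqrt η + Real.sqrt (2 * μ + 2 * η) := add_le_add h2 hd0f.2
    _ = Real.sqrt (2 * μ + 2 * η) + 2 * Real.sqrt η := by ring

/-- If `(P_M □ r) ≤ 0` on `B`, then for every `c₁`,
`inf_{m ∈ M} ¼‖m − c₁‖² ≤ P_M(c₁)`. -/
theorem inf_quarter_norm_sq_le_PFun (M : Set (BSp E)) (hM : IsMaxMonot E M)
    (hconv : ∀ b : BSp E, (⨅ y : BSp E, (PFn E M y + (rB E (b - y) : EReal))) ≤ 0)
    (c₁ : BSp E) :
    (⨅ m ∈ M, (((‖(m - c₁).1‖ ^ 2 + ‖(m - c₁).2‖ ^ 2) / 4 : ℝ) : EReal)) ≤ PFn E M c₁ := by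
  by_cases hT : PFn E M c₁ = ⊤
  · rw [hT]; exact le_top
  obtain ⟨m₀, hm₀⟩ := M_nonempty E M hM
  have hIle : (⨅ m ∈ M, (qB E (m - c₁) : EReal)) ≤ ((qB E (m₀ - c₁) : ℝ) : EReal) :=
    iInf₂_le m₀ hm₀
  have hBot : PFn E M c₁ ≠ ⊥ := by
    rw [PFn]
    intro hbot
    rw [EReal.neg_eq_bot_iff] at hbot
    rw [hbot] at hIle
    exact (EReal.coe_lt_top _).not_ge hIle
  set μ := (PFn E M c₁).toReal with hμdef
  have hμcoe : PFn E M c₁ = (μ : EReal) := (EReal.coe_toReal hT hBot).symm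
  have hμ0 : 0 ≤ μ := by
    have h := PFn_nonneg E M hM c₁
    rw [hμcoe] at h
    exact_mod_cast h
  have hμcoe' : -(⨅ m ∈ M, (qB E (m - c₁) : EReal)) = (μ : EReal) := by
    rw [← PFn]; exact hμcoe
  have hI : (⨅ m ∈ M, (qB E (m - c₁) : EReal)) = ((-μ : ℝ) : EReal) := by
    rw [EReal.coe_neg, ← hμcoe', neg_neg]
  have hμb : ∀ m ∈ M, -μ ≤ qB E (m - c₁) := by
    intro m hm
    have h1 := iInf₂_le (f := fun (m : BSp E) (_ : m ∈ M) => (qB E (m - c₁) : EReal)) m hm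
    rw [hI] at h1
    exact_mod_cast h1
  rw [hμcoe]
  refine le_of_forall_gt_imp_ge_of_dense ?_
  intro c hc
  obtain ⟨t, ht1, ht2⟩ := EReal.exists_between_coe_real hc
  have hμt : μ < t := by exact_mod_cast ht1
  set γ := t - μ with hγdef
  have hγ0 : 0 < γ := by rw [hγdef]; linarith
  set η := min 1 (min (γ / 6) (γ ^ 2 / (32 * (μ + 1)))) with hηdef
  have hη0 : 0 < η := by
    refine lt_min (by norm_num) (lt_min (by linarith) (by positivity))
  have hη1 : η ≤ 1 := min_le_left _ _
  have hη2 : η ≤ γ / 6 := le_trans (min_le_right _ _) (min_le_left _ _)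
  have hη3 : η ≤ γ ^ 2 / (32 * (μ + 1)) := le_trans (min_le_right _ _) (min_le_right _ _)
  obtain ⟨p, hpM, hp1, hp2⟩ := exists_mem_close E M hM hconv c₁ μ hμ0 hμb η hη0
  set A := Real.sqrt (2 * μ + 2 * η) with hA
  set Bq := Real.sqrt η with hB
  have hA2 : A ^ 2 = 2 * μ + 2 * η := Real.sq_sqrt (by linarith)
  have hB2 : Bq ^ 2 = η := Real.sq_sqrt hη0.le
  have hA0 : 0 ≤ A := Real.sqrt_nonneg _
  have hB0 : 0 ≤ Bq := Real.sqrt_nonneg _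
  have hBA : Bq * A ≤ γ / 4 := by
    have h1 : Bq * A = Real.sqrt (η * (2 * μ + 2 * η)) := (Real.sqrt_mul hη0.le _).symm
    have h2 : η * (2 * μ + 2 * η) ≤ γ ^ 2 / 16 := by
      have h3 : η * (2 * μ + 2 * η) ≤ η * (2 * μ + 2) := by nlinarith
      have h4 : η * (2 * μ + 2) ≤ (γ ^ 2 / (32 * (μ + 1))) * (2 * μ + 2) :=
        mul_le_mul_of_nonneg_right hη3 (by linarith)
      have h5 : (γ ^ 2 / (32 * (μ + 1))) * (2 * μ + 2) = γ ^ 2 / 16 := by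
        have : (μ : ℝ) + 1 ≠ 0 := by linarith
        field_simp
        ring
      linarith
    rw [h1]
    calc Real.sqrt (η * (2 * μ + 2 * η)) ≤ Real.sqrt (γ ^ 2 / 16) := Real.sqrt_le_sqrt h2
    _ = γ / 4 := by
        rw [show γ ^ 2 / 16 = (γ / 4) ^ 2 by ring, Real.sqrt_sq (by linarith)]
  have hval : (‖(p - c₁).1‖ ^ 2 + ‖(p - c₁).2‖ ^ 2) / 4 ≤ t := by
    have e1 : ‖(p - c₁).1‖ ^ 2 ≤ (A + 2 * Bq) ^ 2 := by
      have := norm_nonneg (p - c₁).1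
      nlinarith [hp1]
    have e2 : ‖(p - c₁).2‖ ^ 2 ≤ (A + 2 * Bq) ^ 2 := by
      have := norm_nonneg (p - c₁).2
      nlinarith [hp2]
    have e3 : (A + 2 * Bq) ^ 2 = A ^ 2 + 4 * (Bq * A) + 4 * Bq ^ 2 := by ring
    have hγeq : γ = t - μ := hγdef
    linarith [e1, e2, e3, hA2, hB2, hBA, hη2]
  have hfinal : (⨅ m ∈ M, (((‖(m - c₁).1‖ ^ 2 + ‖(m - c₁).2‖ ^ 2) / 4 : ℝ) : EReal)) ≤
      (((‖(p - c₁).1‖ ^ 2 + ‖(p - c₁).2‖ ^ 2) / 4 : ℝ) : EReal) :=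
    iInf₂_le p hpM
  refine le_trans hfinal (le_trans ?_ ht2.le)
  exact_mod_cast hval
end
end

section
/- Let M be a maximally monotone subset of B. Then for every c ∈ B, (P_M □ r)(c) = −inf_{b* ∈ B*} [F_M(b*) + r̃(Lc − b*)], and moreover the infimum on the right-hand side is attained: there exists b* ∈ B* with F_M(b*) + r̃(Lc − b*) = inf_{a* ∈ B*} [F_M(a*) + r̃(Lc − a*)]. -/
open NormedSpace

noncomputable section

variable (E : Type*) [NormedAddCommGroup E] [NormedSpace ℝ E]

variable [CompleteSpace E] [Nontrivial E]
/-! ### Auxiliary material -/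

section Aux

variable {E : Type*} [NormedAddCommGroup E] [NormedSpace ℝ E]

/-- The pairing between `B` and `B*`. -/
def PaB (b : BSp E) (p : BStar E) : ℝ := p.1 b.1 + p.2 b.2

/-- The Fitzpatrick-type function `Φ = P_M + q`. -/
def PhiF (M : Set (BSp E)) (b : BSp E) : EReal := PFn E M b + (qB E b : EReal)

/-- The quadratic perturbation. -/
def gQ (c b : BSp E) : ℝ := (‖c.1 - b.1‖ ^ 2 + ‖c.2 - b.2‖ ^ 2) / 2 - PaB b (LMap E c)

/-- The value function of the perturbed problem. -/
def wV (M : Set (BSp E)) (c u : BSp E) : EReal :=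
  ⨅ b : BSp E, (PhiF M b + (gQ c (b + u) : EReal))

lemma paB_L (b d : BSp E) : PaB b (LMap E d) = d.2 b.1 + b.2 d.1 := by
  simp [PaB, LMap, NormedSpace.dual_def]

lemma qB_sub_eq (d b : BSp E) :
    qB E (d - b) = qB E d - PaB b (LMap E d) + qB E b := by
  simp [qB, paB_L, ContinuousLinearMap.sub_apply, map_sub]
  ring

lemma qS_sub_L (p : BStar E) (b : BSp E) :
    qS E (p - LMap E b) = qS E p - PaB b p + qB E b := by
  simp [qS, qB, PaB, LMap, ContinuousLinearMap.sub_apply, map_sub, NormedSpace.dual_def]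
  ring

lemma qS_L_sub (c : BSp E) (p : BStar E) :
    qS E (LMap E c - p) = qB E c - PaB c p + qS E p := by
  simp [qS, qB, PaB, LMap, ContinuousLinearMap.sub_apply, map_sub, NormedSpace.dual_def]
  ring

lemma paB_self_L (c : BSp E) : PaB c (LMap E c) = 2 * qB E c := by
  simp [PaB, qB, LMap, NormedSpace.dual_def]; ring

lemma rB_decomp (c b : BSp E) :
    rB E (c - b) = qB E b + (gQ c b + qB E c) := by
  have h := qB_sub_eq (E := E) c b
  simp only [rB, gQ]
  have h1 : (c - b).1 = c.1 - b.1 := rfl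
  have h2 : (c - b).2 = c.2 - b.2 := rfl
  rw [h1, h2, h]
  ring

lemma key_q_identity (c b : BSp E) (p : BStar E) :
    qB E (c - b) + qS E (LMap E c - p) - qS E (p - LMap E b) =
      (LMap E c - p).1 (c.1 - b.1) + (LMap E c - p).2 (c.2 - b.2) := by
  simp [qS, qB, PaB, LMap, ContinuousLinearMap.sub_apply, map_sub, NormedSpace.dual_def]
  ring

lemma abs_paB_le (b : BSp E) (p : BStar E) :
    |PaB b p| ≤ ‖p.1‖ * ‖b.1‖ + ‖p.2‖ * ‖b.2‖ := by
  refine (abs_add_le _ _).trans (add_le_add ?_ ?_)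
  · simpa [Real.norm_eq_abs] using (p.1.le_opNorm b.1)
  · simpa [Real.norm_eq_abs] using (p.2.le_opNorm b.2)

end Aux
section ERealAux

lemma ereal_add_coe_neg_cancel (a : EReal) (t : ℝ) : a + (t : EReal) + ((-t : ℝ) : EReal) = a := by
  induction a using EReal.rec with
  | bot => simp
  | coe x => norm_cast; ring
  | top => simp

lemma ereal_neg_add_coe (a : EReal) (t : ℝ) : -(a + (t : EReal)) = -a + ((-t : ℝ) : EReal) := by
  induction a using EReal.rec with
  | bot => simp
  | coe x => norm_cast; ring
  | top => simp

lemma ereal_iInf_add_coe {ι : Sort*} (f : ι → EReal) (t : ℝ) :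
    (⨅ i, f i) + (t : EReal) = ⨅ i, (f i + (t : EReal)) := by
  refine le_antisymm (le_iInf fun i => add_le_add_left (iInf_le _ i) _) ?_
  have h : ∀ i, (⨅ j, (f j + (t : EReal))) + ((-t : ℝ) : EReal) ≤ f i := fun i => by
    calc (⨅ j, (f j + (t : EReal))) + ((-t : ℝ) : EReal)
        ≤ (f i + (t : EReal)) + ((-t : ℝ) : EReal) := add_le_add_left (iInf_le _ i) _
      _ = f i := ereal_add_coe_neg_cancel _ _
  calc (⨅ i, (f i + (t : EReal)))
      = (⨅ i, (f i + (t : EReal))) + ((-t : ℝ) : EReal) + ((- -t : ℝ) : EReal) :=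
        (ereal_add_coe_neg_cancel _ _).symm
    _ ≤ (⨅ i, f i) + ((- -t : ℝ) : EReal) := add_le_add_left (le_iInf h) _
    _ = (⨅ i, f i) + (t : EReal) := by norm_num

lemma ereal_le_coe_of_forall_add {a : EReal} {r : ℝ}
    (h : ∀ ε : ℝ, 0 < ε → a ≤ ((r + ε : ℝ) : EReal)) : a ≤ (r : EReal) := by
  by_contra hc
  push_neg at hc
  rcases EReal.lt_iff_exists_real_btwn.1 hc with ⟨x, hrx, hxa⟩
  have hx : (0 : ℝ) < x - r := by
    have := EReal.coe_lt_coe_iff.1 hrx; linarith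
  have := h ((x - r) / 2) (by linarith)
  have hlt : ((r + (x - r) / 2 : ℝ) : EReal) < (x : EReal) := by
    exact_mod_cast (by linarith : r + (x - r) / 2 < x)
  exact absurd ((this.trans_lt hlt).trans_le hxa.le) (lt_irrefl a).elim
  
end ERealAux
section MAux

variable {E : Type*} [NormedAddCommGroup E] [NormedSpace ℝ E]
variable {M : Set (BSp E)}

lemma IsMaxMonot.nonempty (hM : IsMaxMonot E M) : M.Nonempty := by
  by_contra h
  rw [Set.not_nonempty_iff_eq_empty] at h
  subst h
  have hmono : IsMonot E ({0} : Set (BSp E)) := by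
    intro d hd e he
    simp only [Set.mem_singleton_iff] at hd he
    subst hd; subst he
    simp [qB]
  have := hM.2 {0} hmono (Set.empty_subset _)
  exact absurd (this ▸ rfl : (0 : BSp E) ∈ (∅ : Set (BSp E))) (Set.notMem_empty _)

lemma PFn_le_zero (hmono : IsMonot E M) {m : BSp E} (hm : m ∈ M) : PFn E M m ≤ 0 := by
  have h : (0 : EReal) ≤ ⨅ m' ∈ M, (qB E (m' - m) : EReal) := by
    refine le_iInf₂ fun m' hm' => ?_
    exact_mod_cast hmono m' hm' m hm
  rw [PFn]
  calc -(⨅ m' ∈ M, (qB E (m' - m) : EReal)) ≤ -(0 : EReal) := EReal.neg_le_neg_iff.2 h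
    _ = 0 := neg_zero

lemma coe_le_PFn (b : BSp E) {m : BSp E} (hm : m ∈ M) :
    ((-qB E (m - b) : ℝ) : EReal) ≤ PFn E M b := by
  have h : (⨅ m' ∈ M, (qB E (m' - b) : EReal)) ≤ ((qB E (m - b) : ℝ) : EReal) :=
    iInf₂_le m hm
  rw [PFn, EReal.coe_neg]
  exact EReal.neg_le_neg_iff.2 h

lemma affine_le_PhiF {m : BSp E} (hm : m ∈ M) (b : BSp E) :
    ((PaB b (LMap E m) - qB E m : ℝ) : EReal) ≤ PhiF M b := by
  have h1 : ((-qB E (m - b) : ℝ) : EReal) ≤ PFn E M b := coe_le_PFn b hm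
  have h2 : ((-qB E (m - b) + qB E b : ℝ) : EReal) ≤ PhiF M b := by
    rw [PhiF, EReal.coe_add]
    exact add_le_add_left h1 _
  have h3 : -qB E (m - b) + qB E b = PaB b (LMap E m) - qB E m := by
    rw [qB_sub_eq]; ring
  rwa [h3] at h2

lemma PhiF_ne_bot {m : BSp E} (hm : m ∈ M) (b : BSp E) : PhiF M b ≠ ⊥ :=
  ((EReal.bot_lt_coe _).trans_le (affine_le_PhiF hm b)).ne'

lemma PhiF_le_coe_qB (hmono : IsMonot E M) {m : BSp E} (hm : m ∈ M) :
    PhiF M m ≤ ((qB E m : ℝ) : EReal) := by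
  rw [PhiF]
  calc PFn E M m + ((qB E m : ℝ) : EReal) ≤ 0 + ((qB E m : ℝ) : EReal) :=
        add_le_add_left (PFn_le_zero hmono hm) _
    _ = _ := zero_add _

lemma PhiF_eq_sup (M : Set (BSp E)) (b : BSp E) :
    PhiF M b = ⨆ m ∈ M, ((PaB b (LMap E m) - qB E m : ℝ) : EReal) := by
  refine le_antisymm ?_ (iSup₂_le fun m hm => affine_le_PhiF hm b)
  set S := ⨆ m ∈ M, ((PaB b (LMap E m) - qB E m : ℝ) : EReal) with hS
  have h : ∀ m ∈ M, -S + ((qB E b : ℝ) : EReal) ≤ ((qB E (m - b) : ℝ) : EReal) := by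
    intro m hm
    have h1 : ((PaB b (LMap E m) - qB E m : ℝ) : EReal) ≤ S := le_iSup₂ (f := fun m _ => ((PaB b (LMap E m) - qB E m : ℝ) : EReal)) m hm
    have h2 : -S ≤ ((qB E m - PaB b (LMap E m) : ℝ) : EReal) := by
      calc -S ≤ -((PaB b (LMap E m) - qB E m : ℝ) : EReal) := EReal.neg_le_neg_iff.2 h1
        _ = ((qB E m - PaB b (LMap E m) : ℝ) : EReal) := by norm_cast; ring
    calc -S + ((qB E b : ℝ) : EReal)
        ≤ ((qB E m - PaB b (LMap E m) : ℝ) : EReal) + ((qB E b : ℝ) : EReal) :=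
          add_le_add_left h2 _
      _ = ((qB E (m - b) : ℝ) : EReal) := by
          rw [← EReal.coe_add]
          congr 1
          rw [qB_sub_eq]
  have h4 : -S + ((qB E b : ℝ) : EReal) ≤ ⨅ m ∈ M, ((qB E (m - b) : ℝ) : EReal) :=
    le_iInf₂ h
  have h5 : -(⨅ m ∈ M, ((qB E (m - b) : ℝ) : EReal)) ≤ -(-S + ((qB E b : ℝ) : EReal)) :=
    EReal.neg_le_neg_iff.2 h4
  rw [ereal_neg_add_coe, neg_neg] at h5
  rw [PhiF, PFn]
  calc -(⨅ m ∈ M, ((qB E (m - b) : ℝ) : EReal)) + ((qB E b : ℝ) : EReal)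
      ≤ S + ((-qB E b : ℝ) : EReal) + ((qB E b : ℝ) : EReal) := add_le_add_left h5 _
    _ = S + ((qB E b : ℝ) : EReal) + ((-qB E b : ℝ) : EReal) := by
        rw [add_assoc, add_assoc, add_comm ((-qB E b : ℝ) : EReal)]
    _ = S := ereal_add_coe_neg_cancel _ _

end MAux
section RealAux

variable {E : Type*} [NormedAddCommGroup E] [NormedSpace ℝ E]

lemma weak_duality_real (c b : BSp E) (p : BStar E) :
    qS E (p - LMap E b) ≤ rB E (c - b) + rS E (LMap E c - p) := by
  have hkey := key_q_identity c b p
  set ξ := LMap E c - p with hξ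
  have h1 : |ξ.1 (c.1 - b.1)| ≤ ‖ξ.1‖ * ‖c.1 - b.1‖ := by
    simpa [Real.norm_eq_abs] using ξ.1.le_opNorm (c.1 - b.1)
  have h2 : |ξ.2 (c.2 - b.2)| ≤ ‖ξ.2‖ * ‖c.2 - b.2‖ := by
    simpa [Real.norm_eq_abs] using ξ.2.le_opNorm (c.2 - b.2)
  have e1 : (c - b).1 = c.1 - b.1 := rfl
  have e2 : (c - b).2 = c.2 - b.2 := rfl
  rw [rB, rS, e1, e2]
  have ha1 := abs_le.1 h1
  have ha2 := abs_le.1 h2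
  nlinarith [sq_nonneg (‖ξ.1‖ - ‖c.1 - b.1‖), sq_nonneg (‖ξ.2‖ - ‖c.2 - b.2‖),
    norm_nonneg ξ.1, norm_nonneg ξ.2, norm_nonneg (c.1 - b.1), norm_nonneg (c.2 - b.2)]

lemma paB_add_left (b b' : BSp E) (p : BStar E) : PaB (b + b') p = PaB b p + PaB b' p := by
  simp [PaB]; ring

lemma paB_smul_left (t : ℝ) (b : BSp E) (p : BStar E) : PaB (t • b) p = t * PaB b p := by
  simp [PaB]; ring

set_option maxHeartbeats 1000000 in
lemma gQ_combo (c z1 z2 : BSp E) {t s : ℝ} (ht : 0 ≤ t) (hs : 0 ≤ s) (hts : t + s = 1) :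
    gQ c (t • z1 + s • z2) ≤ t * gQ c z1 + s * gQ c z2 := by
  have e1 : c.1 - (t • z1 + s • z2).1 = t • (c.1 - z1.1) + s • (c.1 - z2.1) := by
    show c.1 - (t • z1.1 + s • z2.1) = _
    calc c.1 - (t • z1.1 + s • z2.1) = (t + s) • c.1 - (t • z1.1 + s • z2.1) := by
          rw [hts, one_smul]
      _ = t • (c.1 - z1.1) + s • (c.1 - z2.1) := by
          rw [add_smul, smul_sub, smul_sub]; abel
  have e2 : c.2 - (t • z1 + s • z2).2 = t • (c.2 - z1.2) + s • (c.2 - z2.2) := by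
    show c.2 - (t • z1.2 + s • z2.2) = _
    calc c.2 - (t • z1.2 + s • z2.2) = (t + s) • c.2 - (t • z1.2 + s • z2.2) := by
          rw [hts, one_smul]
      _ = t • (c.2 - z1.2) + s • (c.2 - z2.2) := by
          rw [add_smul, smul_sub, smul_sub]; abel
  have n1 : ‖c.1 - (t • z1 + s • z2).1‖ ≤ t * ‖c.1 - z1.1‖ + s * ‖c.1 - z2.1‖ := by
    rw [e1]
    refine (norm_add_le _ _).trans ?_
    rw [norm_smul, norm_smul, Real.norm_of_nonneg ht, Real.norm_of_nonneg hs]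
  have n2 : ‖c.2 - (t • z1 + s • z2).2‖ ≤ t * ‖c.2 - z1.2‖ + s * ‖c.2 - z2.2‖ := by
    rw [e2]
    refine (norm_add_le _ _).trans ?_
    rw [norm_smul, norm_smul, Real.norm_of_nonneg ht, Real.norm_of_nonneg hs]
  have hp : PaB (t • z1 + s • z2) (LMap E c) =
      t * PaB z1 (LMap E c) + s * PaB z2 (LMap E c) := by
    rw [paB_add_left, paB_smul_left, paB_smul_left]
  rw [gQ, gQ, gQ, hp]
  have sq_est : ∀ X A B : ℝ, 0 ≤ X → 0 ≤ A → 0 ≤ B → X ≤ t * A + s * B →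
      X ^ 2 ≤ t * A ^ 2 + s * B ^ 2 := by
    intro X A B hX hA hB hle
    have h1 : X ^ 2 ≤ (t * A + s * B) ^ 2 := by nlinarith
    have h2 : (t * A + s * B) ^ 2 ≤ t * A ^ 2 + s * B ^ 2 := by
      nlinarith [mul_nonneg (mul_nonneg ht hs) (sq_nonneg (A - B))]
    linarith
  have q1 := sq_est _ _ _ (norm_nonneg _) (norm_nonneg _) (norm_nonneg _) n1
  have q2 := sq_est _ _ _ (norm_nonneg _) (norm_nonneg _) (norm_nonneg _) n2
  linarith

lemma gQ_continuous (c : BSp E) : Continuous (gQ c) := by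
  apply Continuous.sub
  · apply Continuous.div_const
    apply Continuous.add
    · exact ((continuous_const.sub continuous_fst).norm.pow 2)
    · exact ((continuous_const.sub continuous_snd).norm.pow 2)
  · exact ((LMap E c).1.continuous.comp continuous_fst).add
      ((LMap E c).2.continuous.comp continuous_snd)

lemma exists_near_opNorm {X : Type*} [NormedAddCommGroup X] [NormedSpace ℝ X]
    (f : X →L[ℝ] ℝ) {ε : ℝ} (hε : 0 < ε) : ∃ x : X, ‖x‖ ≤ 1 ∧ ‖f‖ - ε ≤ f x := by
  rcases le_or_gt ‖f‖ ε with h | h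
  · exact ⟨0, by simp, by simp; linarith⟩
  · by_contra hc
    push_neg at hc
    have hbound : ∀ x : X, ‖f x‖ ≤ (‖f‖ - ε) * ‖x‖ := by
      intro x
      rcases eq_or_ne x 0 with rfl | hx
      · simp
      · have hnx : (0 : ℝ) < ‖x‖ := norm_pos_iff.2 hx
        have hu1 : ‖(‖x‖⁻¹ • x)‖ ≤ 1 := by
          rw [norm_smul, Real.norm_of_nonneg (by positivity)]
          rw [inv_mul_cancel₀ hnx.ne']
        have hp := hc (‖x‖⁻¹ • x) hu1
        have hm := hc (-(‖x‖⁻¹ • x)) (by rwa [norm_neg])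
        rw [map_neg] at hm
        have habs : |f (‖x‖⁻¹ • x)| ≤ ‖f‖ - ε := by
          rw [abs_le]; constructor <;> linarith
        have hfx : f x = ‖x‖ * f (‖x‖⁻¹ • x) := by
          rw [map_smul, smul_eq_mul, ← mul_assoc, mul_inv_cancel₀ hnx.ne', one_mul]
        rw [Real.norm_eq_abs, hfx, abs_mul, abs_of_nonneg hnx.le]
        nlinarith [habs, hnx.le, abs_nonneg (f (‖x‖⁻¹ • x))]
    have := f.opNorm_le_bound (by linarith) hbound
    linarith

end RealAux
section VAux

variable {E : Type*} [NormedAddCommGroup E] [NormedSpace ℝ E]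
variable {M : Set (BSp E)} {m0 : BSp E}

lemma paB_sub_right (b : BSp E) (p p' : BStar E) : PaB b (p - p') = PaB b p - PaB b p' := by
  simp [PaB, ContinuousLinearMap.sub_apply]; ring

lemma wV_le_of_mem (hmono : IsMonot E M) (hm0 : m0 ∈ M) (c u : BSp E) :
    wV M c u ≤ ((qB E m0 + gQ c (m0 + u) : ℝ) : EReal) := by
  refine (iInf_le _ m0).trans ?_
  rw [EReal.coe_add]
  exact add_le_add_left (PhiF_le_coe_qB hmono hm0) _

lemma wV_lower (hm0 : m0 ∈ M) (c u : BSp E) :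
    ((-(‖(LMap E m0 - LMap E c).1‖ ^ 2) / 2 - ‖(LMap E m0 - LMap E c).2‖ ^ 2 / 2
      - ‖(LMap E m0 - LMap E c).1‖ * ‖c.1 - u.1‖ - ‖(LMap E m0 - LMap E c).2‖ * ‖c.2 - u.2‖
      - qB E m0 - PaB u (LMap E c) : ℝ) : EReal) ≤ wV M c u := by
  refine le_iInf fun b => ?_
  set ζ := LMap E m0 - LMap E c with hζ
  have h1 : ((PaB b (LMap E m0) - qB E m0 : ℝ) : EReal) ≤ PhiF M b := affine_le_PhiF hm0 b
  have h2 : ((PaB b (LMap E m0) - qB E m0 + gQ c (b + u) : ℝ) : EReal) ≤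
      PhiF M b + ((gQ c (b + u) : ℝ) : EReal) := by
    rw [EReal.coe_add]
    exact add_le_add_left h1 _
  refine le_trans ?_ h2
  rw [EReal.coe_le_coe_iff]
  -- real-valued estimate
  have hsplit : PaB b (LMap E m0) - PaB (b + u) (LMap E c) = PaB b ζ - PaB u (LMap E c) := by
    rw [hζ, paB_sub_right, paB_add_left]; ring
  have hb1 : ‖b.1‖ ≤ ‖c.1 - (b + u).1‖ + ‖c.1 - u.1‖ := by
    have e : b.1 = (c.1 - u.1) - (c.1 - (b + u).1) := by
      show b.1 = (c.1 - u.1) - (c.1 - (b.1 + u.1))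
      abel
    calc ‖b.1‖ = ‖(c.1 - u.1) - (c.1 - (b + u).1)‖ := by rw [← e]
      _ ≤ ‖c.1 - u.1‖ + ‖c.1 - (b + u).1‖ := norm_sub_le _ _
      _ = _ := by ring
  have hb2 : ‖b.2‖ ≤ ‖c.2 - (b + u).2‖ + ‖c.2 - u.2‖ := by
    have e : b.2 = (c.2 - u.2) - (c.2 - (b + u).2) := by
      show b.2 = (c.2 - u.2) - (c.2 - (b.2 + u.2))
      abel
    calc ‖b.2‖ = ‖(c.2 - u.2) - (c.2 - (b + u).2)‖ := by rw [← e]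
      _ ≤ ‖c.2 - u.2‖ + ‖c.2 - (b + u).2‖ := norm_sub_le _ _
      _ = _ := by ring
  have hpa := abs_paB_le b ζ
  have hpa' := abs_le.1 hpa
  rw [gQ]
  rw [sub_add_eq_add_sub, sub_le_iff_le_add]  -- just in case; fallback to nlinarith below
  nlinarith [sq_nonneg (‖c.1 - (b + u).1‖ - ‖ζ.1‖), sq_nonneg (‖c.2 - (b + u).2‖ - ‖ζ.2‖),
    norm_nonneg ζ.1, norm_nonneg ζ.2, norm_nonneg (c.1 - (b + u).1),
    norm_nonneg (c.2 - (b + u).2),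
    mul_le_mul_of_nonneg_left hb1 (norm_nonneg ζ.1),
    mul_le_mul_of_nonneg_left hb2 (norm_nonneg ζ.2), hsplit, hpa'.1]

lemma PhiF_combo {b1 b2 : BSp E} {φ1 φ2 t s : ℝ}
    (h1 : PhiF M b1 ≤ (φ1 : EReal)) (h2 : PhiF M b2 ≤ (φ2 : EReal))
    (ht : 0 ≤ t) (hs : 0 ≤ s) (hts : t + s = 1) :
    PhiF M (t • b1 + s • b2) ≤ ((t * φ1 + s * φ2 : ℝ) : EReal) := by
  rw [PhiF_eq_sup]
  refine iSup₂_le fun m hm => ?_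
  have e1 : PaB b1 (LMap E m) - qB E m ≤ φ1 := by
    exact_mod_cast (affine_le_PhiF hm b1).trans h1
  have e2 : PaB b2 (LMap E m) - qB E m ≤ φ2 := by
    exact_mod_cast (affine_le_PhiF hm b2).trans h2
  have ecomb : PaB (t • b1 + s • b2) (LMap E m) - qB E m =
      t * (PaB b1 (LMap E m) - qB E m) + s * (PaB b2 (LMap E m) - qB E m) := by
    rw [paB_add_left, paB_smul_left, paB_smul_left]
    linear_combination (qB E m) * hts
  rw [EReal.coe_le_coe_iff, ecomb]
  have := mul_le_mul_of_nonneg_left e1 ht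
  have := mul_le_mul_of_nonneg_left e2 hs
  linarith

end VAux
section Subgrad

variable {E : Type*} [NormedAddCommGroup E] [NormedSpace ℝ E]
variable {M : Set (BSp E)} {m0 : BSp E}

lemma wV_ne_top (hmono : IsMonot E M) (hm0 : m0 ∈ M) (c u : BSp E) : wV M c u ≠ ⊤ :=
  ((wV_le_of_mem hmono hm0 c u).trans_lt (EReal.coe_lt_top _)).ne

lemma wV_ne_bot (hm0 : m0 ∈ M) (c u : BSp E) : wV M c u ≠ ⊥ :=
  ((EReal.bot_lt_coe _).trans_le (wV_lower hm0 c u)).ne'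

lemma wV_eq_coe (hmono : IsMonot E M) (hm0 : m0 ∈ M) (c u : BSp E) :
    wV M c u = (((wV M c u).toReal : ℝ) : EReal) :=
  (EReal.coe_toReal (wV_ne_top hmono hm0 c u) (wV_ne_bot hm0 c u)).symm

lemma vV_convexOn (hmono : IsMonot E M) (hm0 : m0 ∈ M) (c : BSp E) :
    ConvexOn ℝ Set.univ (fun u => (wV M c u).toReal) := by
  set v : BSp E → ℝ := fun u => (wV M c u).toReal with hv
  have hreal : ∀ u, wV M c u = ((v u : ℝ) : EReal) := fun u => wV_eq_coe hmono hm0 c u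
  refine ⟨convex_univ, fun u1 _ u2 _ t s ht hs hts => ?_⟩
  refine le_of_forall_pos_le_add fun ε hε => ?_
  -- pick approximate minimizers
  have hlt1 : wV M c u1 < ((v u1 + ε : ℝ) : EReal) := by
    rw [hreal u1]; exact_mod_cast lt_add_of_pos_right _ hε
  have hlt2 : wV M c u2 < ((v u2 + ε : ℝ) : EReal) := by
    rw [hreal u2]; exact_mod_cast lt_add_of_pos_right _ hε
  rw [wV, iInf_lt_iff] at hlt1 hlt2
  obtain ⟨b1, hb1⟩ := hlt1
  obtain ⟨b2, hb2⟩ := hlt2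
  have hnt1 : PhiF M b1 ≠ ⊤ := by
    intro h; rw [h, EReal.top_add_coe] at hb1; exact absurd hb1 (not_lt.2 le_top)
  have hnt2 : PhiF M b2 ≠ ⊤ := by
    intro h; rw [h, EReal.top_add_coe] at hb2; exact absurd hb2 (not_lt.2 le_top)
  set φ1 := (PhiF M b1).toReal with hφ1d
  set φ2 := (PhiF M b2).toReal with hφ2d
  have hφ1 : PhiF M b1 = ((φ1 : ℝ) : EReal) := (EReal.coe_toReal hnt1 (PhiF_ne_bot hm0 b1)).symm
  have hφ2 : PhiF M b2 = ((φ2 : ℝ) : EReal) := (EReal.coe_toReal hnt2 (PhiF_ne_bot hm0 b2)).symm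
  have real1 : φ1 + gQ c (b1 + u1) < v u1 + ε := by
    rw [hφ1, ← EReal.coe_add] at hb1; exact_mod_cast hb1
  have real2 : φ2 + gQ c (b2 + u2) < v u2 + ε := by
    rw [hφ2, ← EReal.coe_add] at hb2; exact_mod_cast hb2
  have hcomb : (t • b1 + s • b2) + (t • u1 + s • u2) = t • (b1 + u1) + s • (b2 + u2) := by
    rw [smul_add, smul_add]; abel
  have hw : wV M c (t • u1 + s • u2) ≤
      ((t * (φ1 + gQ c (b1 + u1)) + s * (φ2 + gQ c (b2 + u2)) : ℝ) : EReal) := by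
    calc wV M c (t • u1 + s • u2)
        ≤ PhiF M (t • b1 + s • b2) +
          ((gQ c ((t • b1 + s • b2) + (t • u1 + s • u2)) : ℝ) : EReal) := iInf_le _ _
      _ ≤ ((t * φ1 + s * φ2 : ℝ) : EReal) +
          ((t * gQ c (b1 + u1) + s * gQ c (b2 + u2) : ℝ) : EReal) := by
          refine add_le_add (PhiF_combo hφ1.le hφ2.le ht hs hts) ?_
          rw [hcomb, EReal.coe_le_coe_iff]
          exact gQ_combo c (b1 + u1) (b2 + u2) ht hs hts
      _ = _ := by rw [← EReal.coe_add]; norm_cast; ring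
  rw [hreal, EReal.coe_le_coe_iff] at hw
  have m1 := mul_le_mul_of_nonneg_left real1.le ht
  have m2 := mul_le_mul_of_nonneg_left real2.le hs
  have : t * (v u1 + ε) + s * (v u2 + ε) = t * v u1 + s * v u2 + ε := by
    linear_combination ε * hts
  simp only [smul_eq_mul]
  linarith

lemma vV_continuous (hmono : IsMonot E M) (hm0 : m0 ∈ M) (c : BSp E) :
    Continuous (fun u => (wV M c u).toReal) := by
  set v : BSp E → ℝ := fun u => (wV M c u).toReal with hv
  set G : BSp E → ℝ := fun u => qB E m0 + gQ c (m0 + u) with hG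
  have hGcont : Continuous G :=
    continuous_const.add ((gQ_continuous c).comp (continuous_const.add continuous_id))
  have hvle : ∀ u, v u ≤ G u := fun u => by
    have h := wV_le_of_mem hmono hm0 c u
    rw [wV_eq_coe hmono hm0 c u] at h
    exact_mod_cast h
  have hbdd : (nhds (0 : BSp E)).IsBoundedUnder (· ≤ ·) v := by
    refine ⟨G 0 + 1, Filter.eventually_map.2 ?_⟩
    have hev : ∀ᶠ u in nhds (0 : BSp E), G u < G 0 + 1 :=
      (hGcont.tendsto 0).eventually (eventually_lt_nhds (lt_add_one (G 0)))
    filter_upwards [hev] with u hu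
    exact (hvle u).trans hu.le
  have hconv := vV_convexOn hmono hm0 c
  have htfae := hconv.continuousOn_tfae isOpen_univ ⟨0, trivial⟩
  have h4 : ∃ x₀ ∈ Set.univ, (nhds x₀).IsBoundedUnder (· ≤ ·) (fun u => (wV M c u).toReal) :=
    ⟨0, trivial, hbdd⟩
  have hcont : ContinuousOn v Set.univ := (htfae.out 3 1).mp h4
  rwa [continuousOn_univ] at hcont

lemma exists_subgradient (hmono : IsMonot E M) (hm0 : m0 ∈ M) (c : BSp E) :
    ∃ p : BStar E, ∀ u : BSp E,
      (wV M c 0).toReal - PaB u p ≤ (wV M c u).toReal := by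
  classical
  set v : BSp E → ℝ := fun u => (wV M c u).toReal with hv
  have hconv := vV_convexOn hmono hm0 c
  have hcont := vV_continuous hmono hm0 c
  set S : Set (BSp E × ℝ) := {x | v x.1 < x.2} with hS
  have hsopen : IsOpen S := by
    have : S = (fun x : BSp E × ℝ => x.2 - v x.1) ⁻¹' Set.Ioi 0 := by
      ext x; simp [hS, sub_pos]
    rw [this]
    exact isOpen_Ioi.preimage (continuous_snd.sub (hcont.comp continuous_fst))
  have hsconv : Convex ℝ S := by
    intro x hx y hy a b ha hb hab
    simp only [hS, Set.mem_setOf_eq] at hx hy ⊢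
    have hcomb : v (a • x.1 + b • y.1) ≤ a * v x.1 + b * v y.1 := by
      have := hconv.2 (Set.mem_univ x.1) (Set.mem_univ y.1) ha hb hab
      simpa using this
    have h1 : (a • x + b • y).1 = a • x.1 + b • y.1 := rfl
    have h2 : (a • x + b • y).2 = a * x.2 + b * y.2 := rfl
    rw [h1, h2]
    rcases ha.eq_or_lt with rfl | ha'
    · have hb1 : b = 1 := by linarith
      subst hb1; simpa using hy
    · have m1 : a * v x.1 < a * x.2 := mul_lt_mul_of_pos_left hx ha'
      have m2 : b * v y.1 ≤ b * y.2 := mul_le_mul_of_nonneg_left hy.le hb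
      calc v (a • x.1 + b • y.1) ≤ a * v x.1 + b * v y.1 := hcomb
        _ < a * x.2 + b * y.2 := by linarith
  have hx0 : ((0 : BSp E), v 0) ∉ S := by simp [hS]
  obtain ⟨f, hsep⟩ := geometric_hahn_banach_open_point hsconv hsopen hx0
  set φ : BSp E → ℝ := fun u => f (u, 0) with hφ
  set α : ℝ := f (0, 1) with hα
  have hlin : ∀ (u : BSp E) (t : ℝ), f (u, t) = φ u + t * α := by
    intro u t
    have hdecomp : ((u, t) : BSp E × ℝ) = (u, (0 : ℝ)) + t • (((0 : BSp E), (1 : ℝ))) := by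
      rw [Prod.smul_mk, Prod.mk_add_mk]
      simp
    rw [hdecomp, map_add, map_smul, smul_eq_mul]
  have hα : α < 0 := by
    have h1 := hsep ((0 : BSp E), v 0 + 1) (by simp [hS])
    rw [hlin, hlin] at h1
    linarith
  have hφ0 : φ (0 : BSp E) = 0 := by
    have : ((0 : BSp E), (0 : ℝ)) = (0 : BSp E × ℝ) := rfl
    rw [hφ]; simp only [this, map_zero]
  have hsub : ∀ u, v 0 - φ u / α ≤ v u := by
    intro u
    by_contra hlt
    push_neg at hlt
    have hmem : (u, v 0 - φ u / α) ∈ S := hlt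
    have h1 := hsep _ hmem
    rw [hlin, hlin, hφ0] at h1
    have hcancel : (φ u / α) * α = φ u := div_mul_cancel₀ _ hα.ne
    nlinarith
  -- package φ/α as an element of BStar
  refine ⟨(α⁻¹ • ((f.comp ((ContinuousLinearMap.inl ℝ (BSp E) ℝ))).comp
      (ContinuousLinearMap.inl ℝ E (StrongDual ℝ E))),
      α⁻¹ • ((f.comp ((ContinuousLinearMap.inl ℝ (BSp E) ℝ))).comp
      (ContinuousLinearMap.inr ℝ E (StrongDual ℝ E)))), fun u => ?_⟩
  have hpa : PaB u (α⁻¹ • ((f.comp ((ContinuousLinearMap.inl ℝ (BSp E) ℝ))).comp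
      (ContinuousLinearMap.inl ℝ E (StrongDual ℝ E))),
      α⁻¹ • ((f.comp ((ContinuousLinearMap.inl ℝ (BSp E) ℝ))).comp
      (ContinuousLinearMap.inr ℝ E (StrongDual ℝ E)))) = φ u / α := by
    have hsplitu : ((u.1, (0 : StrongDual ℝ E)) : BSp E) + ((0 : E), u.2) = u := by
      rw [Prod.mk_add_mk]; simp
    have : φ (u.1, (0 : StrongDual ℝ E)) + φ ((0 : E), u.2) = φ u := by
      rw [hφ]
      show f (((u.1, (0 : StrongDual ℝ E)) : BSp E), (0:ℝ)) + f ((((0 : E), u.2) : BSp E), (0:ℝ)) = _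
      rw [← map_add]
      congr 1
      rw [Prod.mk_add_mk, hsplitu]
      simp
    simp only [PaB, ContinuousLinearMap.smul_apply, ContinuousLinearMap.comp_apply,
      ContinuousLinearMap.inl_apply, ContinuousLinearMap.inr_apply, smul_eq_mul]
    rw [div_eq_inv_mul, ← this]
    show α⁻¹ * f ((u.1, (0 : StrongDual ℝ E)), (0:ℝ)) + α⁻¹ * f (((0 : E), u.2), (0:ℝ)) = _
    rw [hφ]; ring
  rw [hpa]
  exact hsub u

end Subgrad
section FinalEst

variable {E : Type*} [NormedAddCommGroup E] [NormedSpace ℝ E]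

set_option maxHeartbeats 1000000 in
lemma final_real_est (c : BSp E) (p : BStar E) {ε : ℝ} (hε : 0 < ε) :
    ∃ z : BSp E, gQ c z + PaB z p - qS E p + rS E (LMap E c - p) + qB E c ≤ ε := by
  set ξ := LMap E c - p with hξ
  set ε' := ε / (‖ξ.1‖ + ‖ξ.2‖ + 1) with hε'
  have hε'pos : 0 < ε' := div_pos hε (by positivity)
  obtain ⟨x, hx1, hx2⟩ := exists_near_opNorm ξ.1 hε'pos
  obtain ⟨y, hy1, hy2⟩ := exists_near_opNorm ξ.2 hε'pos
  set h : BSp E := (‖ξ.1‖ • x, ‖ξ.2‖ • y) with hh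
  refine ⟨c + h, ?_⟩
  have e1 : c.1 - (c + h).1 = -h.1 := by
    show c.1 - (c.1 + h.1) = -h.1; abel
  have e2 : c.2 - (c + h).2 = -h.2 := by
    show c.2 - (c.2 + h.2) = -h.2; abel
  have hval : gQ c (c + h) + PaB (c + h) p - qS E p + rS E ξ + qB E c
      = (‖h.1‖ ^ 2 + ‖h.2‖ ^ 2) / 2 - (ξ.1 h.1 + ξ.2 h.2) + (‖ξ.1‖ ^ 2 + ‖ξ.2‖ ^ 2) / 2 := by
    have hq : PaB (c + h) p - PaB (c + h) (LMap E c) = -PaB c ξ - PaB h ξ := by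
      rw [hξ, paB_sub_right, paB_sub_right, paB_add_left, paB_add_left]; ring
    have hpc : PaB c ξ = 2 * qB E c - PaB c p := by
      rw [hξ, paB_sub_right, paB_self_L]
    have hqs : qS E ξ = qB E c - PaB c p + qS E p := by
      rw [hξ, qS_L_sub]
    have hph : PaB h ξ = ξ.1 h.1 + ξ.2 h.2 := rfl
    rw [gQ, e1, e2, norm_neg, norm_neg, rS]
    have : PaB (c + h) p = PaB (c + h) (LMap E c) - PaB c ξ - PaB h ξ := by linarith [hq]
    rw [this, hpc, hph, hqs]
    ring
  rw [hval]
  -- estimates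
  have hb1 : ξ.1 h.1 ≥ ‖ξ.1‖ * (‖ξ.1‖ - ε') := by
    have : ξ.1 h.1 = ‖ξ.1‖ * ξ.1 x := by
      show ξ.1 (‖ξ.1‖ • x) = _; rw [map_smul, smul_eq_mul]
    rw [this]
    exact mul_le_mul_of_nonneg_left hx2 (norm_nonneg _)
  have hb2 : ξ.2 h.2 ≥ ‖ξ.2‖ * (‖ξ.2‖ - ε') := by
    have : ξ.2 h.2 = ‖ξ.2‖ * ξ.2 y := by
      show ξ.2 (‖ξ.2‖ • y) = _; rw [map_smul, smul_eq_mul]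
    rw [this]
    exact mul_le_mul_of_nonneg_left hy2 (by positivity)
  have hn1 : ‖h.1‖ ≤ ‖ξ.1‖ := by
    show ‖‖ξ.1‖ • x‖ ≤ ‖ξ.1‖
    rw [norm_smul, Real.norm_of_nonneg (norm_nonneg _)]
    calc ‖ξ.1‖ * ‖x‖ ≤ ‖ξ.1‖ * 1 := mul_le_mul_of_nonneg_left hx1 (norm_nonneg _)
      _ = ‖ξ.1‖ := mul_one _
  have hn2 : ‖h.2‖ ≤ ‖ξ.2‖ := by
    show ‖‖ξ.2‖ • y‖ ≤ ‖ξ.2‖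
    rw [norm_smul, Real.norm_of_nonneg (by positivity : (0:ℝ) ≤ ‖ξ.2‖)]
    calc ‖ξ.2‖ * ‖y‖ ≤ ‖ξ.2‖ * 1 := mul_le_mul_of_nonneg_left hy1 (by positivity)
      _ = ‖ξ.2‖ := mul_one _
  have hsq1 : ‖h.1‖ ^ 2 ≤ ‖ξ.1‖ ^ 2 := pow_le_pow_left₀ (norm_nonneg _) hn1 2
  have hsq2 : ‖h.2‖ ^ 2 ≤ ‖ξ.2‖ ^ 2 := pow_le_pow_left₀ (norm_nonneg _) hn2 2
  have hcancel : ε' * (‖ξ.1‖ + ‖ξ.2‖ + 1) = ε := by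
    rw [hε']; field_simp
  have hb1' : ‖ξ.1‖ ^ 2 - ‖ξ.1‖ * ε' ≤ ξ.1 h.1 := by
    have hexp : ‖ξ.1‖ * (‖ξ.1‖ - ε') = ‖ξ.1‖ ^ 2 - ‖ξ.1‖ * ε' := by ring
    linarith [hb1]
  have hb2' : ‖ξ.2‖ ^ 2 - ‖ξ.2‖ * ε' ≤ ξ.2 h.2 := by
    have hexp : ‖ξ.2‖ * (‖ξ.2‖ - ε') = ‖ξ.2‖ ^ 2 - ‖ξ.2‖ * ε' := by ring
    linarith [hb2]
  have hn : ‖ξ.1‖ * ε' + ‖ξ.2‖ * ε' = ε - ε' := by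
    linear_combination hcancel
  linarith [hsq1, hsq2, hb1', hb2', hε'pos]

end FinalEst

/-- `(P_M □ r)(c) = −inf_{b*} [F_M(b*) + r̃(Lc − b*)]`, and the
infimum on the right-hand side is attained. -/
theorem PFun_infConv_r_eq_neg_FFun_infConvExact_rS (M : Set (BSp E)) (hM : IsMaxMonot E M)
    (c : BSp E) :
    (⨅ b : BSp E, (PFn E M b + (rB E (c - b) : EReal))) =
      -(⨅ p : BStar E, (FFn E M p + (rS E (LMap E c - p) : EReal))) ∧
    ∃ p : BStar E, FFn E M p + (rS E (LMap E c - p) : EReal) =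
      ⨅ p' : BStar E, (FFn E M p' + (rS E (LMap E c - p') : EReal)) := by
  obtain ⟨m0, hm0⟩ := hM.nonempty
  have hmono : IsMonot E M := hM.1
  set v0 : ℝ := (wV M c 0).toReal with hv0
  set s0 : ℝ := v0 + qB E c with hs0
  -- Step 1 : the primal value is the real number `s0`
  have hpt : ∀ b : BSp E, PFn E M b + ((rB E (c - b) : ℝ) : EReal) =
      (PhiF M b + ((gQ c (b + 0) : ℝ) : EReal)) + ((qB E c : ℝ) : EReal) := by
    intro b
    rw [rB_decomp, PhiF, add_zero, EReal.coe_add, EReal.coe_add]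
    simp only [add_assoc]
  have hS : (⨅ b : BSp E, (PFn E M b + (rB E (c - b) : EReal))) = ((s0 : ℝ) : EReal) := by
    calc (⨅ b : BSp E, (PFn E M b + (rB E (c - b) : EReal)))
        = ⨅ b : BSp E, ((PhiF M b + ((gQ c (b + 0) : ℝ) : EReal)) + ((qB E c : ℝ) : EReal)) :=
          iInf_congr hpt
      _ = (⨅ b : BSp E, (PhiF M b + ((gQ c (b + 0) : ℝ) : EReal))) + ((qB E c : ℝ) : EReal) :=
          (ereal_iInf_add_coe _ _).symm
      _ = wV M c 0 + ((qB E c : ℝ) : EReal) := rfl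
      _ = ((v0 : ℝ) : EReal) + ((qB E c : ℝ) : EReal) := by
          rw [wV_eq_coe hmono hm0 c 0]
      _ = ((s0 : ℝ) : EReal) := by rw [← EReal.coe_add, hs0]
  -- Step 2 : weak duality
  have hweak : ∀ p : BStar E,
      ((-s0 : ℝ) : EReal) ≤ FFn E M p + ((rS E (LMap E c - p) : ℝ) : EReal) := by
    intro p
    have hZ : ∀ b : BSp E, PFn E M b + ((qS E (p - LMap E b) : ℝ) : EReal) ≤
        (PFn E M b + ((rB E (c - b) : ℝ) : EReal)) + ((rS E (LMap E c - p) : ℝ) : EReal) := by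
      intro b
      rw [add_assoc, ← EReal.coe_add]
      exact add_le_add_right (EReal.coe_le_coe_iff.2 (weak_duality_real c b p)) _
    have hinf : (⨅ b : BSp E, (PFn E M b + ((qS E (p - LMap E b) : ℝ) : EReal))) ≤
        ((s0 + rS E (LMap E c - p) : ℝ) : EReal) := by
      calc (⨅ b : BSp E, (PFn E M b + ((qS E (p - LMap E b) : ℝ) : EReal)))
          ≤ ⨅ b : BSp E, ((PFn E M b + ((rB E (c - b) : ℝ) : EReal)) +
              ((rS E (LMap E c - p) : ℝ) : EReal)) := iInf_mono hZ
        _ = (⨅ b : BSp E, (PFn E M b + ((rB E (c - b) : ℝ) : EReal))) +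
              ((rS E (LMap E c - p) : ℝ) : EReal) := (ereal_iInf_add_coe _ _).symm
        _ = ((s0 : ℝ) : EReal) + ((rS E (LMap E c - p) : ℝ) : EReal) := by rw [hS]
        _ = ((s0 + rS E (LMap E c - p) : ℝ) : EReal) := by rw [← EReal.coe_add]
    have h2 : ((-(s0 + rS E (LMap E c - p)) : ℝ) : EReal) ≤ FFn E M p := by
      rw [FFn, EReal.coe_neg]
      exact EReal.neg_le_neg_iff.2 hinf
    calc ((-s0 : ℝ) : EReal)
        = ((-(s0 + rS E (LMap E c - p)) : ℝ) : EReal) + ((rS E (LMap E c - p) : ℝ) : EReal) := by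
          rw [← EReal.coe_add]; congr 1; ring
      _ ≤ FFn E M p + ((rS E (LMap E c - p) : ℝ) : EReal) := add_le_add_left h2 _
  -- Step 3 : the subgradient gives the optimal dual point
  obtain ⟨pb, hsub⟩ := exists_subgradient hmono hm0 c
  have hterm : ∀ b z : BSp E, ((v0 - PaB z pb - gQ c z + qS E pb : ℝ) : EReal) ≤
      PFn E M b + ((qS E (pb - LMap E b) : ℝ) : EReal) := by
    intro b z
    have e1 : PFn E M b + ((qS E (pb - LMap E b) : ℝ) : EReal) =
        PhiF M b + ((qS E pb - PaB b pb : ℝ) : EReal) := by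
      rw [qS_sub_L,
        show (qS E pb - PaB b pb + qB E b : ℝ) = qB E b + (qS E pb - PaB b pb) from by ring,
        EReal.coe_add, ← add_assoc, PhiF]
    have e2 : ((v0 - PaB (z - b) pb - gQ c z : ℝ) : EReal) ≤ PhiF M b := by
      have h1 : ((v0 - PaB (z - b) pb : ℝ) : EReal) ≤ wV M c (z - b) := by
        rw [wV_eq_coe hmono hm0 c (z - b)]
        exact_mod_cast hsub (z - b)
      have h2 : wV M c (z - b) ≤ PhiF M b + ((gQ c (b + (z - b)) : ℝ) : EReal) := iInf_le _ b
      have h3 : b + (z - b) = z := by abel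
      rw [h3] at h2
      have h4 := add_le_add_left (h1.trans h2) ((-(gQ c z) : ℝ) : EReal)
      calc ((v0 - PaB (z - b) pb - gQ c z : ℝ) : EReal)
          = ((v0 - PaB (z - b) pb : ℝ) : EReal) + ((-(gQ c z) : ℝ) : EReal) := by
            rw [← EReal.coe_add]; norm_cast
        _ ≤ (PhiF M b + ((gQ c z : ℝ) : EReal)) + ((-(gQ c z) : ℝ) : EReal) := h4
        _ = PhiF M b := ereal_add_coe_neg_cancel _ _
    rw [e1]
    calc ((v0 - PaB z pb - gQ c z + qS E pb : ℝ) : EReal)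
        = ((v0 - PaB (z - b) pb - gQ c z : ℝ) : EReal) + ((qS E pb - PaB b pb : ℝ) : EReal) := by
          rw [← EReal.coe_add]
          have : PaB (z - b) pb = PaB z pb - PaB b pb := by
            have := paB_add_left (z - b) b pb
            rw [show z - b + b = z from by abel] at this
            linarith
          rw [this]
          congr 1
          ring
      _ ≤ PhiF M b + ((qS E pb - PaB b pb : ℝ) : EReal) := add_le_add_left e2 _
  have hFF : ∀ z : BSp E, FFn E M pb ≤ ((-(v0 - PaB z pb - gQ c z + qS E pb) : ℝ) : EReal) := by
    intro z
    rw [FFn, EReal.coe_neg]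
    exact EReal.neg_le_neg_iff.2 (le_iInf fun b => hterm b z)
  have hY : FFn E M pb + ((rS E (LMap E c - pb) : ℝ) : EReal) ≤ ((-s0 : ℝ) : EReal) := by
    refine ereal_le_coe_of_forall_add fun ε hε => ?_
    obtain ⟨z, hz⟩ := final_real_est c pb hε
    calc FFn E M pb + ((rS E (LMap E c - pb) : ℝ) : EReal)
        ≤ ((-(v0 - PaB z pb - gQ c z + qS E pb) : ℝ) : EReal) +
            ((rS E (LMap E c - pb) : ℝ) : EReal) := add_le_add_left (hFF z) _
      _ = ((-(v0 - PaB z pb - gQ c z + qS E pb) + rS E (LMap E c - pb) : ℝ) : EReal) := by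
          rw [← EReal.coe_add]
      _ ≤ ((-s0 + ε : ℝ) : EReal) := by
          rw [EReal.coe_le_coe_iff, hs0]
          linarith [hz]
  -- Step 4 : conclusion
  have hYeq : FFn E M pb + ((rS E (LMap E c - pb) : ℝ) : EReal) = ((-s0 : ℝ) : EReal) :=
    le_antisymm hY (hweak pb)
  have hT : (⨅ p : BStar E, (FFn E M p + (rS E (LMap E c - p) : EReal))) = ((-s0 : ℝ) : EReal) :=
    le_antisymm ((iInf_le _ pb).trans hYeq.le) (le_iInf hweak)
  constructor
  · rw [hS, hT, ← EReal.coe_neg, neg_neg]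
  · exact ⟨pb, hYeq.trans hT.symm⟩
end
end

section
/- Let M be a maximally monotone subset of B of type (NI) and let c ∈ B. Then there exists b* ∈ M^♯ such that r̃(Lc − b*) = 0. -/
open NormedSpace

noncomputable section

variable (E : Type*) [NormedAddCommGroup E] [NormedSpace ℝ E]

variable [CompleteSpace E] [Nontrivial E]


private lemma le_of_forall_eps' {a b : ℝ} (h : ∀ ε > (0:ℝ), a ≤ b + ε) : a ≤ b := by
  by_contra h'; push_neg at h'; linarith [h ((a - b)/2) (by linarith)]

private lemma dual_norm_le' {F : Type*} [NormedAddCommGroup F] [NormedSpace ℝ F]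
    (f : F →L[ℝ] ℝ) {c : ℝ} (h : ∀ x, ‖x‖ ≤ 1 → f x ≤ c) : ‖f‖ ≤ c := by
  have hc : 0 ≤ c := by simpa using h 0 (by simp)
  refine f.opNorm_le_bound hc fun x => ?_
  rcases eq_or_ne x 0 with rfl | hx
  · simp
  · have hxn : (0:ℝ) < ‖x‖ := norm_pos_iff.2 hx
    have h1 := h (‖x‖⁻¹ • x) (by simp [norm_smul, abs_of_nonneg, inv_mul_cancel₀ hxn.ne'])
    have h2 := h (-(‖x‖⁻¹ • x)) (by simp [norm_smul, abs_of_nonneg, inv_mul_cancel₀ hxn.ne'])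
    simp only [map_smul, map_neg, smul_eq_mul] at h1 h2
    have he : ‖x‖ * (‖x‖⁻¹ * f x) = f x := by field_simp
    have h1' := mul_le_mul_of_nonneg_left h1 hxn.le
    have h2' := mul_le_mul_of_nonneg_left h2 hxn.le
    rw [he] at h1'
    rw [mul_neg, he] at h2'
    rw [Real.norm_eq_abs, abs_le]
    constructor <;> nlinarith


set_option maxHeartbeats 8000000 in
/-- If `M` is maximally monotone of type (NI) and `c ∈ B`, then there
exists `b* ∈ M^♯` with `r̃(Lc − b*) = 0`. -/
theorem exists_sharp_rS_eq_zero (M : Set (BSp E)) (hM : IsMaxMonot E M) (hNI : TypeNI E M)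
    (c : BSp E) :
    ∃ p ∈ Sharp E M, rS E (LMap E c - p) = 0 := by
  classical
  -- M is nonempty
  obtain ⟨m₀, hm₀⟩ : M.Nonempty := by
    by_contra hne
    rw [Set.not_nonempty_iff_eq_empty] at hne
    have hmono : IsMonot E ({0} : Set (BSp E)) := by
      intro d hd e he
      simp only [Set.mem_singleton_iff] at hd he
      subst hd; subst he; simp [qB]
    have := hM.2 {0} hmono (by rw [hne]; exact Set.empty_subset _)
    rw [hne] at this
    exact absurd this (by simp [Set.eq_empty_iff_forall_notMem])
  -- the two convex sets
  set A : Set (BSp E × ℝ) :=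
    {z | ∀ m ∈ M, z.1.2 m.1 + m.2 z.1.1 - qB E m ≤ z.2} with hA_def
  set V : Set (BSp E × ℝ) :=
    {z | z.2 + (‖z.1.1 - c.1‖ ^ 2 + ‖z.1.2 - c.2‖ ^ 2) / 2
        - (c.2 z.1.1 + z.1.2 c.1) + qB E c < 0} with hV_def
  -- membership facts
  have hmemA : ∀ m ∈ M, ∀ t : ℝ, qB E m ≤ t → ((m, t) : BSp E × ℝ) ∈ A := by
    intro m hm t ht
    simp only [hA_def, Set.mem_setOf_eq]
    intro m' hm'
    have h0 := hM.1 m' hm' m hm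
    have e : qB E (m' - m) = m'.2 m'.1 - m'.2 m.1 - m.2 m'.1 + m.2 m.1 := by
      simp [qB]; ring
    rw [e] at h0
    simp only [qB] at ht ⊢
    linarith
  -- every element of A lies above q (uses maximality)
  have hAq : ∀ z ∈ A, qB E z.1 ≤ z.2 := by
    intro z hz
    simp only [hA_def, Set.mem_setOf_eq] at hz
    by_contra hlt
    push_neg at hlt
    have hpos : ∀ m ∈ M, 0 < qB E (m - z.1) := by
      intro m hm
      have h1 := hz m hm
      have e : qB E (m - z.1) = m.2 m.1 - m.2 z.1.1 - z.1.2 m.1 + z.1.2 z.1.1 := by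
        simp [qB]; ring
      rw [e]
      simp only [qB] at hlt h1
      linarith
    have hqneg : ∀ x : BSp E, qB E (-x) = qB E x := by intro x; simp [qB]
    have hins : IsMonot E (insert z.1 M) := by
      intro d hd e he
      rcases Set.mem_insert_iff.1 hd with hd' | hd <;>
        rcases Set.mem_insert_iff.1 he with he' | he
      · rw [hd', he', sub_self]; simp [qB]
      · rw [hd']
        have h2 := hpos e he
        rw [← hqneg (e - z.1), neg_sub] at h2
        exact h2.le
      · rw [he']; exact (hpos d hd).le
      · exact hM.1 d hd e he
    have heq := hM.2 _ hins (Set.subset_insert _ _)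
    have hbM : z.1 ∈ M := heq ▸ Set.mem_insert z.1 M
    have h3 := hpos z.1 hbM
    rw [sub_self] at h3
    simp [qB] at h3
  -- disjointness
  have hdisj : Disjoint V A := by
    rw [Set.disjoint_left]
    intro z hzV hzA
    have h1 := hAq z hzA
    have h2 : -(‖z.1.2 - c.2‖ * ‖z.1.1 - c.1‖) ≤ qB E (z.1 - c) := by
      have h3 := (z.1.2 - c.2).le_opNorm (z.1.1 - c.1)
      rw [Real.norm_eq_abs, abs_le] at h3
      have e : qB E (z.1 - c) = (z.1.2 - c.2) (z.1.1 - c.1) := by simp [qB]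
      rw [e]
      exact h3.1
    have e2 : qB E (z.1 - c)
        = qB E z.1 - z.1.2 c.1 - c.2 z.1.1 + qB E c := by
      simp [qB]; ring
    simp only [hV_def, Set.mem_setOf_eq] at hzV
    nlinarith [sq_nonneg (‖z.1.1 - c.1‖ - ‖z.1.2 - c.2‖), norm_nonneg (z.1.1 - c.1),
      norm_nonneg (z.1.2 - c.2)]
  -- V is open
  have hVopen : IsOpen V := by
    have c1 : Continuous fun z : BSp E × ℝ => ‖z.1.1 - c.1‖ ^ 2 :=
      ((continuous_fst.fst.sub continuous_const).norm).pow 2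
    have c2 : Continuous fun z : BSp E × ℝ => ‖z.1.2 - c.2‖ ^ 2 :=
      ((continuous_fst.snd.sub continuous_const).norm).pow 2
    have c3 : Continuous fun z : BSp E × ℝ => c.2 z.1.1 :=
      c.2.continuous.comp continuous_fst.fst
    have c4 : Continuous fun z : BSp E × ℝ => z.1.2 c.1 := by
      have he : (fun z : BSp E × ℝ => z.1.2 c.1)
          = (fun w : StrongDual ℝ E => (inclusionInDoubleDual ℝ E c.1) w)
            ∘ (fun z : BSp E × ℝ => z.1.2) := by
        funext z
        simp [dual_def]
      rw [he]
      exact (inclusionInDoubleDual ℝ E c.1).continuous.comp continuous_fst.snd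
    have hcont : Continuous fun z : BSp E × ℝ =>
        z.2 + (‖z.1.1 - c.1‖ ^ 2 + ‖z.1.2 - c.2‖ ^ 2) / 2
          - (c.2 z.1.1 + z.1.2 c.1) + qB E c :=
      ((continuous_snd.add ((c1.add c2).div_const 2)).sub (c3.add c4)).add continuous_const
    have hVeq : V = (fun z : BSp E × ℝ =>
        z.2 + (‖z.1.1 - c.1‖ ^ 2 + ‖z.1.2 - c.2‖ ^ 2) / 2
          - (c.2 z.1.1 + z.1.2 c.1) + qB E c) ⁻¹' Set.Iio 0 := rfl
    rw [hVeq]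
    exact hcont.isOpen_preimage _ isOpen_Iio
  -- V is convex
  have hVconv : Convex ℝ V := by
    intro z hz z' hz' a b ha hb hab
    simp only [hV_def, Set.mem_setOf_eq] at hz hz' ⊢
    have key1 : ∀ x y w : E, a • (x - w) + b • (y - w) = (a • x + b • y) - w := by
      intro x y w
      rw [smul_sub, smul_sub, sub_add_sub_comm, ← add_smul, hab, one_smul]
    have key2 : ∀ x y w : StrongDual ℝ E, a • (x - w) + b • (y - w) = (a • x + b • y) - w := by
      intro x y w
      rw [smul_sub, smul_sub, sub_add_sub_comm, ← add_smul, hab, one_smul]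
    have e1 : (a • z + b • z').1.1 - c.1 = a • (z.1.1 - c.1) + b • (z'.1.1 - c.1) := by
      rw [key1]
      simp [Prod.fst_add, Prod.smul_fst]
    have e2 : (a • z + b • z').1.2 - c.2 = a • (z.1.2 - c.2) + b • (z'.1.2 - c.2) := by
      rw [key2]
      simp [Prod.fst_add, Prod.smul_fst]
    have n1 : ‖(a • z + b • z').1.1 - c.1‖ ≤ a * ‖z.1.1 - c.1‖ + b * ‖z'.1.1 - c.1‖ := by
      rw [e1]
      refine (norm_add_le _ _).trans ?_
      rw [norm_smul, norm_smul, Real.norm_eq_abs, Real.norm_eq_abs,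
        abs_of_nonneg ha, abs_of_nonneg hb]
    have n2 : ‖(a • z + b • z').1.2 - c.2‖ ≤ a * ‖z.1.2 - c.2‖ + b * ‖z'.1.2 - c.2‖ := by
      rw [e2]
      refine (norm_add_le _ _).trans ?_
      rw [norm_smul, norm_smul, Real.norm_eq_abs, Real.norm_eq_abs,
        abs_of_nonneg ha, abs_of_nonneg hb]
    have sq1 : ‖(a • z + b • z').1.1 - c.1‖ ^ 2
        ≤ a * ‖z.1.1 - c.1‖ ^ 2 + b * ‖z'.1.1 - c.1‖ ^ 2 := by
      nlinarith [norm_nonneg ((a • z + b • z').1.1 - c.1), norm_nonneg (z.1.1 - c.1),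
        norm_nonneg (z'.1.1 - c.1), sq_nonneg (‖z.1.1 - c.1‖ - ‖z'.1.1 - c.1‖),
        mul_nonneg ha hb]
    have sq2 : ‖(a • z + b • z').1.2 - c.2‖ ^ 2
        ≤ a * ‖z.1.2 - c.2‖ ^ 2 + b * ‖z'.1.2 - c.2‖ ^ 2 := by
      nlinarith [norm_nonneg ((a • z + b • z').1.2 - c.2), norm_nonneg (z.1.2 - c.2),
        norm_nonneg (z'.1.2 - c.2), sq_nonneg (‖z.1.2 - c.2‖ - ‖z'.1.2 - c.2‖),
        mul_nonneg ha hb]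
    have l1 : c.2 ((a • z + b • z').1.1) = a * c.2 z.1.1 + b * c.2 z'.1.1 := by
      simp [Prod.fst_add, Prod.smul_fst]
    have l2 : ((a • z + b • z').1.2) c.1 = a * z.1.2 c.1 + b * z'.1.2 c.1 := by
      simp [Prod.fst_add, Prod.smul_fst]
    have l3 : (a • z + b • z').2 = a * z.2 + b * z'.2 := by
      simp [Prod.snd_add, Prod.smul_snd]
    rw [l1, l2, l3]
    have hqc : a * qB E c + b * qB E c = qB E c := by rw [← add_mul, hab, one_mul]
    rcases eq_or_lt_of_le ha with ha' | ha'
    · have hb1 : b = 1 := by linarith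
      rw [← ha', hb1] at *
      simp only [zero_mul, one_mul, zero_add, zero_smul, one_smul] at *
      linarith
    · have h1' : a * (z.2 + (‖z.1.1 - c.1‖ ^ 2 + ‖z.1.2 - c.2‖ ^ 2) / 2
          - (c.2 z.1.1 + z.1.2 c.1) + qB E c) < 0 := mul_neg_of_pos_of_neg ha' hz
      have h2' := mul_le_mul_of_nonneg_left hz'.le hb
      rw [mul_zero] at h2'
      linarith [sq1, sq2, hqc]
  -- A is convex
  have hAconv : Convex ℝ A := by
    intro z hz z' hz' a b ha hb hab
    simp only [hA_def, Set.mem_setOf_eq] at hz hz' ⊢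
    intro m hm
    have h1 := hz m hm
    have h2 := hz' m hm
    have l1 : m.2 ((a • z + b • z').1.1) = a * m.2 z.1.1 + b * m.2 z'.1.1 := by
      simp [Prod.fst_add, Prod.smul_fst]
    have l2 : ((a • z + b • z').1.2) m.1 = a * z.1.2 m.1 + b * z'.1.2 m.1 := by
      simp [Prod.fst_add, Prod.smul_fst]
    have l3 : (a • z + b • z').2 = a * z.2 + b * z'.2 := by
      simp [Prod.snd_add, Prod.smul_snd]
    rw [l1, l2, l3]
    have hqm : a * qB E m + b * qB E m = qB E m := by rw [← add_mul, hab, one_mul]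
    have h1' := mul_le_mul_of_nonneg_left h1 ha
    have h2' := mul_le_mul_of_nonneg_left h2 hb
    linarith [hqm]
  -- separation
  obtain ⟨f, s, hfV, hfA⟩ := geometric_hahn_banach_open hVconv hVopen hAconv hdisj
  -- decomposition of f
  have hfsplit : ∀ (b : BSp E) (t : ℝ),
      f (b, t) = f (b, 0) + t * f ((0 : BSp E), (1 : ℝ)) := by
    intro b t
    have he : ((b, t) : BSp E × ℝ) = (b, 0) + t • ((0 : BSp E), (1 : ℝ)) := by
      simp [Prod.ext_iff]
    rw [he, map_add, map_smul, smul_eq_mul]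
  set β := f ((0 : BSp E), (1 : ℝ)) with hβ_def
  -- β > 0
  have hβpos : 0 < β := by
    have hVlow : ∀ b : BSp E, f (b, 0) +
        (-(‖b.1 - c.1‖ ^ 2 + ‖b.2 - c.2‖ ^ 2) / 2 + (c.2 b.1 + b.2 c.1) - qB E c - 1) * β
          < s := by
      intro b
      have hmem : ((b, -(‖b.1 - c.1‖ ^ 2 + ‖b.2 - c.2‖ ^ 2) / 2 + (c.2 b.1 + b.2 c.1)
          - qB E c - 1) : BSp E × ℝ) ∈ V := by
        simp only [hV_def, Set.mem_setOf_eq]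
        ring_nf
        norm_num
      have := hfV _ hmem
      rwa [hfsplit] at this
    rcases lt_trichotomy β 0 with hneg | hzero | hpos
    · set t₀ := max (qB E m₀) ((s - f (m₀, 0)) / β + 1) with ht₀
      have hmem := hmemA m₀ hm₀ t₀ (le_max_left _ _)
      have h1 := hfA _ hmem
      rw [hfsplit] at h1
      have h2 : (s - f (m₀, 0)) / β + 1 ≤ t₀ := le_max_right _ _
      have h3 : t₀ * β < s - f (m₀, 0) := by
        have h4 : (s - f (m₀, 0)) / β < t₀ := by linarith
        calc t₀ * β < ((s - f (m₀, 0)) / β) * β := (mul_lt_mul_right_of_neg hneg).2 h4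
          _ = s - f (m₀, 0) := div_mul_cancel₀ _ hneg.ne
      linarith
    · have h1 := hVlow m₀
      have h2 := hfA _ (hmemA m₀ hm₀ (qB E m₀) le_rfl)
      rw [hfsplit] at h2
      rw [hzero, mul_zero, add_zero] at h1 h2
      linarith
    · exact hpos
  -- the linear functional g(d) = f(d,0)/β
  set g : BSp E →L[ℝ] ℝ :=
    β⁻¹ • (f.comp (ContinuousLinearMap.inl ℝ (BSp E) ℝ)) with hg_def
  have hg_app : ∀ d : BSp E, g d = β⁻¹ * f (d, 0) := by
    intro d
    simp [hg_def]
  have hfg : ∀ d : BSp E, f (d, 0) = β * g d := by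
    intro d
    rw [hg_app, ← mul_assoc, mul_inv_cancel₀ hβpos.ne', one_mul]
  -- σ'
  set σ' : ℝ := s / β - g c - qB E c with hσ'_def
  -- the dual point coordinates
  set u1 : StrongDual ℝ E := g.comp (ContinuousLinearMap.inl ℝ E (StrongDual ℝ E)) + c.2 with hu1_def
  set u2 : StrongDual ℝ (StrongDual ℝ E) :=
    g.comp (ContinuousLinearMap.inr ℝ E (StrongDual ℝ E)) + inclusionInDoubleDual ℝ E c.1
    with hu2_def
  have hu : ∀ d : BSp E, u1 d.1 + u2 d.2 = g d + (c.2 d.1 + d.2 c.1) := by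
    intro d
    have e1 : u1 d.1 = g (d.1, 0) + c.2 d.1 := by simp [hu1_def]
    have e2 : u2 d.2 = g (0, d.2) + d.2 c.1 := by simp [hu2_def, dual_def]
    have e3 : g (d.1, 0) + g (0, d.2) = g d := by
      rw [← map_add]
      congr 1
      simp [Prod.ext_iff]
    rw [e1, e2]
    linarith [e3]
  -- V-side inequality
  have hVs : ∀ d : BSp E, u1 d.1 + u2 d.2 ≤ (‖d.1‖ ^ 2 + ‖d.2‖ ^ 2) / 2 + σ' := by
    intro d
    refine le_of_forall_eps' fun ε hε => ?_
    have hmem : (((c.1 + d.1, c.2 + d.2),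
        -(‖d.1‖ ^ 2 + ‖d.2‖ ^ 2) / 2 + (c.2 (c.1 + d.1) + (c.2 + d.2) c.1)
          - qB E c - ε) : BSp E × ℝ) ∈ V := by
      simp only [hV_def, Set.mem_setOf_eq]
      have e1 : (c.1 + d.1) - c.1 = d.1 := by abel
      have e2 : (c.2 + d.2) - c.2 = d.2 := by abel
      rw [e1, e2]
      linarith [hε]
    have h1 := hfV _ hmem
    rw [hfsplit, hfg] at h1
    have hgb : g (c.1 + d.1, c.2 + d.2) = g c + g d := by
      have hpair : ((c.1 + d.1, c.2 + d.2) : BSp E) = c + d := rfl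
      rw [hpair, map_add]
    have h2 : g (c.1 + d.1, c.2 + d.2)
        + (-(‖d.1‖ ^ 2 + ‖d.2‖ ^ 2) / 2 + (c.2 (c.1 + d.1) + (c.2 + d.2) c.1)
          - qB E c - ε) < s / β := by
      rw [lt_div_iff₀ hβpos]
      nlinarith [h1]
    have e4 : c.2 (c.1 + d.1) = c.2 c.1 + c.2 d.1 := by simp
    have e5 : (c.2 + d.2) c.1 = c.2 c.1 + d.2 c.1 := by simp
    have e6 : qB E c = c.2 c.1 := rfl
    rw [hu d]
    rw [hgb, e4, e5, e6] at h2
    simp only [hσ'_def, e6]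
    linarith
  -- norm bound : (‖u1‖² + ‖u2‖²)/2 ≤ σ'
  have hnorm : (‖u1‖ ^ 2 + ‖u2‖ ^ 2) / 2 ≤ σ' := by
    set K : ℝ := (‖u1‖ ^ 2 + ‖u2‖ ^ 2) / 2 + σ' with hK_def
    have step0 : ∀ (x : E) (x' : StrongDual ℝ E), ‖x‖ ≤ 1 → ‖x'‖ ≤ 1 →
        ‖u1‖ * u1 x + ‖u2‖ * u2 x' ≤ K := by
      intro x x' hx hx'
      have h1 := hVs (‖u1‖ • x, ‖u2‖ • x')
      simp only [map_smul, smul_eq_mul] at h1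
      have n1 : ‖(‖u1‖ • x : E)‖ ≤ ‖u1‖ := by
        rw [norm_smul, Real.norm_eq_abs, abs_of_nonneg (norm_nonneg _)]
        nlinarith [norm_nonneg u1]
      have n2 : ‖(‖u2‖ • x' : StrongDual ℝ E)‖ ≤ ‖u2‖ := by
        rw [norm_smul, Real.norm_eq_abs, abs_of_nonneg (norm_nonneg u2)]
        nlinarith [norm_nonneg u2]
      have sq1 : ‖(‖u1‖ • x : E)‖ ^ 2 ≤ ‖u1‖ ^ 2 :=
        pow_le_pow_left₀ (norm_nonneg _) n1 2
      have sq2 : ‖(‖u2‖ • x' : StrongDual ℝ E)‖ ^ 2 ≤ ‖u2‖ ^ 2 :=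
        pow_le_pow_left₀ (norm_nonneg _) n2 2
      simp only [hK_def]
      linarith
    have step1 : ∀ x' : StrongDual ℝ E, ‖x'‖ ≤ 1 → ‖u1‖ ^ 2 + ‖u2‖ * u2 x' ≤ K := by
      intro x' hx'
      rcases eq_or_lt_of_le (norm_nonneg u1) with ha0 | ha'
      · have h0 := step0 0 x' (by simp) hx'
        simp only [map_zero, mul_zero, zero_add] at h0
        rw [← ha0]
        simpa using h0
      · have hb1 : ‖u1‖ ≤ (K - ‖u2‖ * u2 x') / ‖u1‖ := by
          refine dual_norm_le' u1 fun x hx => ?_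
          rw [le_div_iff₀ ha']
          have h0 := step0 x x' hx hx'
          linarith
        rw [le_div_iff₀ ha'] at hb1
        nlinarith
    rcases eq_or_lt_of_le (norm_nonneg u2) with hb0 | hb'
    · have h0 := step1 0 (by simp)
      simp only [map_zero, mul_zero, add_zero] at h0
      simp only [hK_def] at h0
      nlinarith [h0, hb0.symm]
    · have hb2 : ‖u2‖ ≤ (K - ‖u1‖ ^ 2) / ‖u2‖ := by
        refine dual_norm_le' u2 fun x' hx' => ?_
        rw [le_div_iff₀ hb']
        have h0 := step1 x' hx'
        linarith
      rw [le_div_iff₀ hb'] at hb2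
      simp only [hK_def] at hb2
      nlinarith
  -- A-side inequality
  have hAs : ∀ m ∈ M, σ' ≤ qB E (m - c) + (u1 (m.1 - c.1) + u2 (m.2 - c.2)) := by
    intro m hm
    have h1 := hfA _ (hmemA m hm (qB E m) le_rfl)
    rw [hfsplit, hfg] at h1
    have h2 : s / β ≤ g m + qB E m := by
      rw [div_le_iff₀ hβpos]
      nlinarith [h1]
    have h4 := hu (m - c)
    have e1 : (m - c).1 = m.1 - c.1 := rfl
    have e2 : (m - c).2 = m.2 - c.2 := rfl
    rw [e1, e2] at h4
    have e3 : g (m - c) = g m - g c := map_sub g m c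
    rw [e3] at h4
    have e4 : qB E (m - c) = m.2 m.1 - m.2 c.1 - c.2 m.1 + c.2 c.1 := by
      simp [qB]; ring
    have e5 : c.2 ((m - c).1) = c.2 m.1 - c.2 c.1 := by
      rw [e1, map_sub]
    have e6 : ((m - c).2) c.1 = m.2 c.1 - c.2 c.1 := by
      rw [e2]; simp
    rw [e1] at e5
    rw [e2] at e6
    have e7 : qB E m = m.2 m.1 := rfl
    have e8 : qB E c = c.2 c.1 := rfl
    rw [e7] at h2
    rw [e5, e6] at h4
    simp only [hσ'_def, e8]
    rw [e4, h4]
    linarith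
  -- the point p
  set p : BStar E := (c.2 - u1, inclusionInDoubleDual ℝ E c.1 - u2) with hp_def
  set ρ : ℝ := (‖u1‖ ^ 2 + ‖u2‖ ^ 2) / 2 + u2 u1 with hρ_def
  -- key estimate
  have hkey : ∀ m ∈ M, ρ ≤ qS E (LMap E m - p) := by
    intro m hm
    have e : qS E (LMap E m - p)
        = qB E (m - c) + (u1 (m.1 - c.1) + u2 (m.2 - c.2)) + u2 u1 := by
      simp only [qS, LMap, hp_def, Prod.snd_sub, Prod.fst_sub, qB]
      simp [dual_def, map_sub]
      ring
    rw [e]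
    have h1 := hAs m hm
    simp only [hρ_def]
    exact add_le_add_left (hnorm.trans h1) _
  -- ρ ≥ 0
  have hρ0 : 0 ≤ ρ := by
    have h1 := u2.le_opNorm u1
    rw [Real.norm_eq_abs, abs_le] at h1
    simp only [hρ_def]
    nlinarith [sq_nonneg (‖u1‖ - ‖u2‖), h1.1]
  -- ρ ≤ 0 from (NI)
  have hρle : ρ ≤ 0 := by
    have h0 : (0 : EReal) ≤ -(⨅ m ∈ M, (qS E (LMap E m - p) : EReal)) := hNI p
    have h0' : (⨅ m ∈ M, (qS E (LMap E m - p) : EReal)) ≤ 0 := by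
      refine EReal.neg_le_neg_iff.mp ?_
      rw [neg_zero]
      exact h0
    have h2 : (ρ : EReal) ≤ ⨅ m ∈ M, (qS E (LMap E m - p) : EReal) :=
      le_iInf₂ fun m hm => EReal.coe_le_coe_iff.2 (hkey m hm)
    exact EReal.coe_nonpos.1 (h2.trans h0')
  have hρ : ρ = 0 := le_antisymm hρle hρ0
  -- conclusion
  refine ⟨p, ?_, ?_⟩
  · show GFn E M p ≤ 0
    have h6 : (0 : EReal) ≤ ⨅ m ∈ M, (qS E (LMap E m - p) : EReal) := by
      refine le_iInf₂ fun m hm => ?_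
      have h5 : (0:ℝ) ≤ qS E (LMap E m - p) := hρ ▸ hkey m hm
      exact EReal.coe_nonneg.2 h5
    have h7 : -(⨅ m ∈ M, (qS E (LMap E m - p) : EReal)) ≤ -0 :=
      EReal.neg_le_neg_iff.mpr h6
    rw [neg_zero] at h7
    exact h7
  · have e : LMap E c - p = ((u1, u2) : BStar E) := by
      simp [LMap, hp_def, Prod.ext_iff]
      exact sub_sub_cancel (inclusionInDoubleDual ℝ E c.1) u2
    rw [e]
    show (‖u1‖ ^ 2 + ‖u2‖ ^ 2) / 2 + qS E (u1, u2) = 0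
    have e2 : qS E ((u1, u2) : BStar E) = u2 u1 := rfl
    rw [e2]
    exact hρ
end
end

section
/- Let V be a closed monotone linear subspace of B and let V^𝔸 = {(y*,y**) ∈ B* : y*(x) = y**(x*) for all (x,x*) ∈ V} be its adjoint subspace. Then V^𝔸 is a monotone subset of B* if and only if V is a maximally monotone subset of B of type (NI). -/
open NormedSpace

noncomputable section

variable (E : Type*) [NormedAddCommGroup E] [NormedSpace ℝ E]

variable [CompleteSpace E] [Nontrivial E]

/-- The adjoint subspace `V^𝔸`. -/
def adjSet (V : Set (BSp E)) : Set (BStar E) :=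
  {p | ∀ m ∈ V, p.1 m.1 = p.2 m.2}



namespace AdjProofAux

/-- Discriminant lemma: if `t*A ≤ g + t²*Q` for all real `t`, then `A² ≤ 4gQ`. -/
private lemma quad_bound {A g Q : ℝ} (hg : 0 ≤ g) (hQ : 0 ≤ Q)
    (H : ∀ t : ℝ, t * A ≤ g + t ^ 2 * Q) : A ^ 2 ≤ 4 * g * Q := by
  rcases eq_or_lt_of_le hQ with hQ0 | hQ0
  · have hA : A = 0 := by
      by_contra hA
      have h1 := H ((g + 1) / A)
      rw [div_mul_cancel₀ _ hA, ← hQ0, mul_zero, add_zero] at h1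
      linarith
    rw [hA, ← hQ0]
    norm_num
  · have h1 := H (A / (2 * Q))
    have h2 : A / (2 * Q) * A = A ^ 2 / (2 * Q) := by ring
    have h3 : (A / (2 * Q)) ^ 2 * Q = A ^ 2 / (4 * Q) := by
      field_simp
      ring
    rw [h2, h3] at h1
    have h4 : A ^ 2 / (2 * Q) = 2 * (A ^ 2 / (4 * Q)) := by ring
    have h5 : A ^ 2 / (4 * Q) ≤ g := by linarith
    have h6 := (div_le_iff₀ (by linarith : (0:ℝ) < 4 * Q)).1 h5
    linarith

/-- From `t²·Y ≤ t·X` for all real `t`, conclude `X = 0`. -/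
private lemma zero_of_forall_sq {X Y : ℝ} (H : ∀ t : ℝ, t ^ 2 * Y ≤ t * X) : X = 0 := by
  have habs : ∀ t : ℝ, 0 < t → |X| ≤ t * |Y| := by
    intro t ht
    have h1 := H t
    have h2 := H (-t)
    rw [abs_le]
    constructor <;> nlinarith [le_abs_self Y, neg_abs_le Y]
  by_contra hX
  have hX' : 0 < |X| := abs_pos.2 hX
  have h := habs (|X| / (2 * (|Y| + 1))) (by positivity)
  have hY : 0 ≤ |Y| := abs_nonneg Y
  have h2 : |X| / (2 * (|Y| + 1)) * |Y| < |X| := by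
    rw [div_mul_eq_mul_div, div_lt_iff₀ (by positivity)]
    nlinarith
  linarith

end AdjProofAux

section AdjProofMain

open AdjProofAux

variable {E}

/-- The duality pairing of `b ∈ B` with `p ∈ B*`. -/
private def prA (m : BSp E) (p : BStar E) : ℝ := p.1 m.1 + p.2 m.2

private lemma prA_smul (t : ℝ) (m : BSp E) (p : BStar E) :
    prA (t • m) p = t * prA m p := by
  simp only [prA, Prod.smul_fst, Prod.smul_snd, map_smul, smul_eq_mul]
  ring

private lemma prA_add (m m' : BSp E) (p : BStar E) :
    prA (m + m') p = prA m p + prA m' p := by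
  simp only [prA, Prod.fst_add, Prod.snd_add, map_add]
  ring

private lemma prA_sub_right (m : BSp E) (p p' : BStar E) :
    prA m (p - p') = prA m p - prA m p' := by
  simp only [prA, Prod.fst_sub, Prod.snd_sub, ContinuousLinearMap.sub_apply]
  ring

private lemma prA_smul_right (m : BSp E) (t : ℝ) (p : BStar E) :
    prA m (t • p) = t * prA m p := by
  simp only [prA, Prod.smul_fst, Prod.smul_snd, ContinuousLinearMap.smul_apply, smul_eq_mul]
  ring

private lemma prA_LMap (u v : BSp E) :
    prA u (LMap E v) = v.2 u.1 + u.2 v.1 := by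
  simp only [prA, LMap, dual_def]

private lemma qB_smul (t : ℝ) (m : BSp E) : qB E (t • m) = t ^ 2 * qB E m := by
  simp only [qB, Prod.smul_fst, Prod.smul_snd, map_smul, ContinuousLinearMap.smul_apply,
    smul_eq_mul]
  ring

private lemma qB_affine (v u : BSp E) (t : ℝ) :
    qB E (v + t • u) = qB E v + t * (v.2 u.1 + u.2 v.1) + t ^ 2 * qB E u := by
  simp only [qB, Prod.fst_add, Prod.snd_add, Prod.smul_fst, Prod.smul_snd, map_add, map_smul,
    ContinuousLinearMap.add_apply, ContinuousLinearMap.smul_apply, smul_eq_mul]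
  ring

private lemma qB_sub_expand (b m : BSp E) :
    qB E (b - m) = qB E b - (m.2 b.1 + b.2 m.1) + qB E m := by
  simp only [qB, Prod.fst_sub, Prod.snd_sub, map_sub, ContinuousLinearMap.sub_apply]
  ring

private lemma qS_LMap_sub (m : BSp E) (p : BStar E) :
    qS E (LMap E m - p) = qB E m - prA m p + qS E p := by
  simp only [qS, qB, prA, LMap, Prod.fst_sub, Prod.snd_sub, map_sub,
    ContinuousLinearMap.sub_apply, dual_def]
  ring

private lemma qS_sub_LMap (p : BStar E) (v : BSp E) :
    qS E (p - LMap E v) = qS E p - prA v p + qB E v := by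
  simp only [qS, qB, prA, LMap, Prod.fst_sub, Prod.snd_sub, map_sub,
    ContinuousLinearMap.sub_apply, dual_def]
  ring

private lemma qS_LMap_sub_smul (b : BSp E) (t : ℝ) (p : BStar E) :
    qS E (LMap E b - t • p) = qB E b - t * prA b p + t ^ 2 * qS E p := by
  simp only [qS, qB, prA, LMap, Prod.fst_sub, Prod.snd_sub, Prod.smul_fst, Prod.smul_snd,
    map_sub, map_smul, ContinuousLinearMap.sub_apply, ContinuousLinearMap.smul_apply,
    smul_eq_mul, dual_def]
  ring

private lemma qB_nonneg_of_monot {V : Submodule ℝ (BSp E)}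
    (hVmono : IsMonot E (V : Set (BSp E))) {m : BSp E} (hm : m ∈ V) : 0 ≤ qB E m := by
  have h := hVmono m hm 0 V.zero_mem
  simpa using h

set_option maxHeartbeats 4000000 in
/-- The key analytic lemma: if `q̃ ≤ 0` on `V^⊥` and `V` is a monotone subspace,
then `V` is of type (NI) in real form. -/
private lemma key_lemma {V : Submodule ℝ (BSp E)}
    (hVmono : IsMonot E (V : Set (BSp E)))
    (hA : ∀ w : BStar E, (∀ m ∈ V, w.1 m.1 + w.2 m.2 = 0) → qS E w ≤ 0)
    (p : BStar E) (ε₀ : ℝ) (hε₀ : 0 < ε₀) :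
    ∃ m ∈ V, qS E (LMap E m - p) < ε₀ := by
  by_contra hcon
  push_neg at hcon
  have hub : ∀ m ∈ V, prA m p - qB E m ≤ qS E p - ε₀ := by
    intro m hm
    have h1 := hcon m hm
    rw [qS_LMap_sub] at h1
    linarith
  set T : Set ℝ := (fun m : BSp E => prA m p - qB E m) '' (V : Set (BSp E)) with hTdef
  have hT0 : (0:ℝ) ∈ T := ⟨0, V.zero_mem, by simp [prA, qB]⟩
  have hTne : T.Nonempty := ⟨0, hT0⟩
  have hTbdd : BddAbove T := by
    refine ⟨qS E p - ε₀, ?_⟩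
    rintro x ⟨m, hm, rfl⟩
    exact hub m hm
  set h : ℝ := sSup T with hh
  have h0 : 0 ≤ h := le_csSup hTbdd hT0
  have hS : h ≤ qS E p - ε₀ := csSup_le hTne (by rintro x ⟨m, hm, rfl⟩; exact hub m hm)
  have hup : ∀ m ∈ V, prA m p - qB E m ≤ h := fun m hm => le_csSup hTbdd ⟨m, hm, rfl⟩
  have hsc : ∀ m ∈ V, (prA m p) ^ 2 ≤ 4 * h * qB E m := by
    intro m hm
    refine quad_bound h0 (qB_nonneg_of_monot hVmono hm) ?_
    intro t
    have h1 := hup (t • m) (V.smul_mem t hm)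
    rw [prA_smul, qB_smul] at h1
    linarith
  set K : ℝ := Real.sqrt (2 * h + 2) with hK
  have hK2 : K ^ 2 = 2 * h + 2 := Real.sq_sqrt (by linarith)
  have hKnn : 0 ≤ K := Real.sqrt_nonneg _
  set C : ℝ := 2 * (‖p.1‖ + ‖p.2‖) + 2 * K + 5 with hC
  have hCpos : 0 < C := by positivity
  set ε : ℝ := min 1 (ε₀ / (2 * C)) with hεdef
  have hε : 0 < ε := lt_min one_pos (by positivity)
  have hε1 : ε ≤ 1 := min_le_left _ _
  have hεC : ε ≤ ε₀ / (2 * C) := min_le_right _ _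
  have hlt : h - ε ^ 2 < h := by nlinarith
  obtain ⟨x, hxT, hxgt⟩ := exists_lt_of_lt_csSup hTne hlt
  obtain ⟨v, hv, rfl⟩ := hxT
  set g : ℝ := h - (prA v p - qB E v) with hg
  have hg0 : 0 ≤ g := by have := hup v hv; simp only [hg]; linarith
  have hxgt' : h - ε ^ 2 < prA v p - qB E v := by simpa using hxgt
  have hgε : g ≤ ε ^ 2 := by simp only [hg]; linarith
  set w : BStar E := p - LMap E v with hw
  have hprw : ∀ u : BSp E, prA u w = prA u p - (v.2 u.1 + u.2 v.1) := by
    intro u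
    rw [hw, prA_sub_right, prA_LMap]
  have hφsq : ∀ u ∈ V, (prA u w) ^ 2 ≤ 4 * g * qB E u := by
    intro u hu
    refine quad_bound hg0 (qB_nonneg_of_monot hVmono hu) ?_
    intro t
    have h1 := hup (v + t • u) (V.add_mem hv (V.smul_mem t hu))
    rw [prA_add, prA_smul, qB_affine] at h1
    rw [hprw, mul_sub]
    have hgdef : g = h - (prA v p - qB E v) := hg
    linarith
  have hqv : qB E v ≤ 2 * h + 2 := by
    have h1 := hsc v hv
    have h2 : h + qB E v - ε ^ 2 ≤ prA v p := by linarith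
    have hqv0 := qB_nonneg_of_monot hVmono hv
    have hε2 : ε ^ 2 ≤ 1 := by nlinarith
    rcases le_or_gt (h + qB E v - ε ^ 2) 0 with hc | hc
    · linarith
    · have h3 : (h + qB E v - ε ^ 2) ^ 2 ≤ (prA v p) ^ 2 := by nlinarith
      nlinarith [sq_nonneg (h - ε ^ 2), sq_nonneg (qB E v - 2 * (h + ε ^ 2))]
  have hφv : |prA v w| ≤ 2 * ε * K := by
    have h1 := hφsq v hv
    have h2 : (prA v w) ^ 2 ≤ (2 * ε * K) ^ 2 := by
      have h3 : 4 * g * qB E v ≤ 4 * ε ^ 2 * (2 * h + 2) := by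
        nlinarith [qB_nonneg_of_monot hVmono hv]
      nlinarith
    calc |prA v w| = Real.sqrt ((prA v w) ^ 2) := (Real.sqrt_sq_eq_abs _).symm
      _ ≤ Real.sqrt ((2 * ε * K) ^ 2) := Real.sqrt_le_sqrt h2
      _ = 2 * ε * K := Real.sqrt_sq (by positivity)
  set Ψ : (E × StrongDual ℝ E) →L[ℝ] ℝ :=
    w.1.comp (ContinuousLinearMap.fst ℝ E (StrongDual ℝ E)) +
      w.2.comp (ContinuousLinearMap.snd ℝ E (StrongDual ℝ E)) with hΨdef
  have hΨ : ∀ u : BSp E, Ψ u = prA u w := by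
    intro u
    simp only [hΨdef, prA, ContinuousLinearMap.add_apply, ContinuousLinearMap.comp_apply,
      ContinuousLinearMap.coe_fst', ContinuousLinearMap.coe_snd']
  set f : StrongDual ℝ V := Ψ.comp V.subtypeL with hf
  have hsg : Real.sqrt g ≤ ε := by
    calc Real.sqrt g ≤ Real.sqrt (ε ^ 2) := Real.sqrt_le_sqrt hgε
      _ = ε := Real.sqrt_sq hε.le
  have hfnorm : @Norm.norm (StrongDual ℝ V) (ContinuousLinearMap.hasOpNorm (𝕜 := ℝ) (𝕜₂ := ℝ) (E := V) (F := ℝ) (σ₁₂ := RingHom.id ℝ)) f ≤ 2 * Real.sqrt g := by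
    refine ContinuousLinearMap.opNorm_le_bound _ (by positivity) ?_
    intro x
    have hx := hφsq (x : BSp E) x.2
    have hqx : qB E (x : BSp E) ≤ ‖(x : BSp E)‖ * ‖(x : BSp E)‖ := by
      have h1 : qB E (x : BSp E) ≤ |qB E (x : BSp E)| := le_abs_self _
      have h2 : |qB E (x : BSp E)| ≤ ‖(x : BSp E).2‖ * ‖(x : BSp E).1‖ := by
        rw [← Real.norm_eq_abs]
        exact ((x : BSp E).2).le_opNorm (x : BSp E).1
      have h3 : ‖(x : BSp E).1‖ ≤ ‖(x : BSp E)‖ := norm_fst_le _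
      have h4 : ‖(x : BSp E).2‖ ≤ ‖(x : BSp E)‖ := norm_snd_le _
      calc qB E (x : BSp E) ≤ ‖(x : BSp E).2‖ * ‖(x : BSp E).1‖ := h1.trans h2
        _ ≤ ‖(x : BSp E)‖ * ‖(x : BSp E)‖ :=
            mul_le_mul h4 h3 (norm_nonneg _) (norm_nonneg _)
    have hsg2 : Real.sqrt g ^ 2 = g := Real.sq_sqrt hg0
    have h5 : (prA (x : BSp E) w) ^ 2 ≤ (2 * Real.sqrt g * ‖(x : BSp E)‖) ^ 2 := by
      nlinarith [hg0, norm_nonneg (x : BSp E)]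
    have h6 : |prA (x : BSp E) w| ≤ 2 * Real.sqrt g * ‖(x : BSp E)‖ := by
      calc |prA (x : BSp E) w| = Real.sqrt ((prA (x : BSp E) w) ^ 2) :=
            (Real.sqrt_sq_eq_abs _).symm
        _ ≤ Real.sqrt ((2 * Real.sqrt g * ‖(x : BSp E)‖) ^ 2) := Real.sqrt_le_sqrt h5
        _ = 2 * Real.sqrt g * ‖(x : BSp E)‖ := Real.sqrt_sq (by positivity)
    have hfx : f x = prA (x : BSp E) w := by
      simp only [hf, ContinuousLinearMap.comp_apply, Submodule.subtypeL_apply]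
      exact hΨ _
    rw [hfx, Real.norm_eq_abs]
    exact h6
  obtain ⟨F, hFext, hFnorm⟩ := exists_extension_norm_eq V f
  have hFn : ‖F‖ ≤ 2 * ε := by
    rw [hFnorm]
    linarith
  have he₁n : ∀ x : E, |F ((x, 0) : BSp E)| ≤ 2 * ε * ‖x‖ := by
    intro x
    have h1 := F.le_opNorm ((x, 0) : BSp E)
    have h2 : ‖((x, (0 : StrongDual ℝ E)) : BSp E)‖ = ‖x‖ := by
      rw [Prod.norm_def]
      simp
    rw [h2, Real.norm_eq_abs] at h1
    calc |F ((x, 0) : BSp E)| ≤ ‖F‖ * ‖x‖ := h1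
      _ ≤ 2 * ε * ‖x‖ := mul_le_mul_of_nonneg_right hFn (norm_nonneg _)
  set e₁ : StrongDual ℝ E := F.comp (ContinuousLinearMap.inl ℝ E (StrongDual ℝ E)) with he₁
  set e₂ : StrongDual ℝ (StrongDual ℝ E) := F.comp (ContinuousLinearMap.inr ℝ E (StrongDual ℝ E)) with he₂
  have he₁a : ∀ x : E, e₁ x = F ((x, 0) : BSp E) := by
    intro x
    simp only [he₁, ContinuousLinearMap.comp_apply, ContinuousLinearMap.inl_apply]
  have he₂a : ∀ x : StrongDual ℝ E, e₂ x = F ((0, x) : BSp E) := by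
    intro x
    simp only [he₂, ContinuousLinearMap.comp_apply, ContinuousLinearMap.inr_apply]
  have he₁norm : ‖e₁‖ ≤ 2 * ε := by
    refine ContinuousLinearMap.opNorm_le_bound _ (by positivity) ?_
    intro x
    rw [Real.norm_eq_abs, he₁a]
    exact he₁n x
  have he₂norm : ‖e₂‖ ≤ 2 * ε := by
    refine ContinuousLinearMap.opNorm_le_bound _ (by positivity) ?_
    intro x
    rw [Real.norm_eq_abs, he₂a]
    have h1 := F.le_opNorm ((0, x) : BSp E)
    have h2 : ‖(((0 : E), x) : BSp E)‖ = ‖x‖ := by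
      rw [Prod.norm_def]
      simp
    rw [h2, Real.norm_eq_abs] at h1
    calc |F ((0, x) : BSp E)| ≤ ‖F‖ * ‖x‖ := h1
      _ ≤ 2 * ε * ‖x‖ := mul_le_mul_of_nonneg_right hFn (norm_nonneg _)
  have hFu : ∀ u : BSp E, e₁ u.1 + e₂ u.2 = F u := by
    intro u
    rw [he₁a, he₂a, ← map_add]
    congr 1
    simp
  have hFV : ∀ m : BSp E, m ∈ V → F m = prA m w := by
    intro m hm
    have h1 : F ((⟨m, hm⟩ : V) : BSp E) = f ⟨m, hm⟩ := hFext ⟨m, hm⟩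
    have h2 : f (⟨m, hm⟩ : V) = prA m w := by
      simp only [hf, ContinuousLinearMap.comp_apply, Submodule.subtypeL_apply]
      exact hΨ _
    rw [← h2]
    exact h1
  set p₀ : BStar E := (w.1 - e₁, w.2 - e₂) with hp₀def
  have hp₀ : ∀ m ∈ V, p₀.1 m.1 + p₀.2 m.2 = 0 := by
    intro m hm
    have h1 : p₀.1 m.1 + p₀.2 m.2 = prA m w - (e₁ m.1 + e₂ m.2) := by
      simp only [hp₀def, prA, ContinuousLinearMap.sub_apply]
      ring
    rw [h1, hFu m, hFV m hm]
    ring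
  have happ := hA p₀ hp₀
  have hqp₀ : qS E p₀ = qS E w - (p.2 e₁ + e₂ p.1) + (e₁ v.1 + e₂ v.2) + e₂ e₁ := by
    simp only [hp₀def, qS, hw, Prod.fst_sub, Prod.snd_sub, LMap, map_sub,
      ContinuousLinearMap.sub_apply, dual_def]
    ring
  have hqw : qS E w = qS E p - prA v p + qB E v := by
    rw [hw]
    exact qS_sub_LMap p v
  have hqwlb : ε₀ ≤ qS E w := by
    have h1 := hup v hv
    rw [hqw]
    linarith
  have hvw : e₁ v.1 + e₂ v.2 = prA v w := by
    rw [hFu v, hFV v hv]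
  -- numeric bounds
  have hb1 : p.2 e₁ ≤ ‖p.2‖ * (2 * ε) := by
    have h1 : p.2 e₁ ≤ |p.2 e₁| := le_abs_self _
    have h2 : |p.2 e₁| ≤ ‖p.2‖ * ‖e₁‖ := by
      rw [← Real.norm_eq_abs]
      exact p.2.le_opNorm e₁
    have h3 : ‖p.2‖ * ‖e₁‖ ≤ ‖p.2‖ * (2 * ε) :=
      mul_le_mul_of_nonneg_left he₁norm (by positivity)
    linarith
  have hb2 : e₂ p.1 ≤ 2 * ε * ‖p.1‖ := by
    have h1 : e₂ p.1 ≤ |e₂ p.1| := le_abs_self _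
    have h2 : |e₂ p.1| ≤ ‖e₂‖ * ‖p.1‖ := by
      rw [← Real.norm_eq_abs]
      exact e₂.le_opNorm p.1
    have h3 : ‖e₂‖ * ‖p.1‖ ≤ 2 * ε * ‖p.1‖ :=
      mul_le_mul_of_nonneg_right he₂norm (norm_nonneg _)
    linarith
  have hb3 : -(2 * ε * K) ≤ prA v w := by
    have := neg_abs_le (prA v w)
    linarith
  have hb4 : -(4 * ε ^ 2) ≤ e₂ e₁ := by
    have h1 : |e₂ e₁| ≤ ‖e₂‖ * ‖e₁‖ := by
      rw [← Real.norm_eq_abs]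
      exact e₂.le_opNorm e₁
    have h2 : ‖e₂‖ * ‖e₁‖ ≤ (2 * ε) * (2 * ε) := by
      exact mul_le_mul he₂norm he₁norm (norm_nonneg _) (by positivity)
    have h3 := neg_abs_le (e₂ e₁)
    linarith [h1, h2, h3]
  -- combine
  clear_value T h K C ε g w Ψ f e₁ e₂ p₀
  have hfinal : ε₀ ≤ ε * (C - 1) := by
    have h1 : qS E p₀ ≤ 0 := happ
    rw [hqp₀, hvw] at h1
    have h2 : ε₀ ≤ 2 * ε * ‖p.2‖ + 2 * ε * ‖p.1‖ + 2 * ε * K + 4 * ε ^ 2 := by linarith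
    have h3 : 4 * ε ^ 2 ≤ 4 * ε := by
      calc 4 * ε ^ 2 = (4 * ε) * ε := by ring
        _ ≤ (4 * ε) * 1 := by
            refine mul_le_mul_of_nonneg_left hε1 ?_
            positivity
        _ = 4 * ε := by ring
    have h4 : ε * (C - 1) = 2 * ε * ‖p.1‖ + 2 * ε * ‖p.2‖ + 2 * ε * K + 4 * ε := by
      rw [hC]; ring
    linarith
  have h2C : 2 * C * ε ≤ ε₀ := by
    have h := (le_div_iff₀ (by positivity : (0:ℝ) < 2 * C)).1 hεC
    linarith
  linarith [mul_pos hε hCpos, hfinal, h2C]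

end AdjProofMain

/-- Bauschke–Borwein–Wang–Yao: `V^𝔸` is monotone iff `V` is a
maximally monotone subset of `B` of type (NI). -/
theorem adj_monotone_iff_maxMonot_typeNI (V : Submodule ℝ (BSp E))
    (hVclosed : IsClosed (V : Set (BSp E))) (hVmono : IsMonot E (V : Set (BSp E))) :
    IsMonotStar E (adjSet E (V : Set (BSp E))) ↔
      IsMaxMonot E (V : Set (BSp E)) ∧ TypeNI E (V : Set (BSp E)) := by
  classical
  constructor
  · -- hard direction
    intro hstar
    -- q̃ ≤ 0 on V^⊥
    have hA : ∀ w : BStar E, (∀ m ∈ V, w.1 m.1 + w.2 m.2 = 0) → qS E w ≤ 0 := by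
      intro w hw
      have h1 : ((w.1, -w.2) : BStar E) ∈ adjSet E (V : Set (BSp E)) := by
        intro m hm
        have := hw m hm
        simp only [ContinuousLinearMap.neg_apply]
        linarith
      have h0 : ((0, 0) : BStar E) ∈ adjSet E (V : Set (BSp E)) := by
        intro m hm
        simp
      have h2 := hstar _ h1 _ h0
      have h3 : qS E (((w.1, -w.2) : BStar E) - ((0, 0) : BStar E)) = -qS E w := by
        simp [qS]
      rw [h3] at h2
      linarith
    have hkey := fun p ε₀ hε₀ => key_lemma hVmono hA p ε₀ hε₀
    constructor
    · -- maximal monotonicity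
      refine ⟨hVmono, ?_⟩
      intro A' hA' hsub
      refine Set.Subset.antisymm ?_ hsub
      intro b hb
      by_contra hbV
      obtain ⟨φ, u, hφlt, hφb⟩ :=
        geometric_hahn_banach_closed_point (V.convex) hVclosed hbV
      have hφ0 : ∀ m ∈ V, φ m = 0 := by
        intro m hm
        by_contra hm0
        have h1 := hφlt ((u / φ m) • m) (V.smul_mem _ hm)
        rw [map_smul, smul_eq_mul, div_mul_cancel₀ _ hm0] at h1
        exact lt_irrefl _ h1
      have hu0 : 0 < u := by
        have := hφlt 0 V.zero_mem
        simpa using this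
      set pφ : BStar E := (φ.comp (ContinuousLinearMap.inl ℝ E (StrongDual ℝ E)),
        φ.comp (ContinuousLinearMap.inr ℝ E (StrongDual ℝ E))) with hpφ
      have hpr : ∀ c : BSp E, prA c pφ = φ c := by
        intro c
        simp only [hpφ, prA, ContinuousLinearMap.comp_apply, ContinuousLinearMap.inl_apply,
          ContinuousLinearMap.inr_apply]
        rw [← map_add]
        congr 1
        simp
      have hperp : ∀ m ∈ V, prA m pφ = 0 := by
        intro m hm
        rw [hpr]
        exact hφ0 m hm
      -- monotone relatedness to all of V
      have hmono : ∀ m ∈ V, 0 ≤ qB E (b - m) := by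
        intro m hm
        exact hA' b hb m (hsub hm)
      -- ∀ t, qS (Lb - t•pφ) ≤ qB b
      have hqt : ∀ t : ℝ, qS E (LMap E b - t • pφ) ≤ qB E b := by
        intro t
        by_contra hgt
        push_neg at hgt
        obtain ⟨m, hm, hlt⟩ := hkey (LMap E b - t • pφ) (qS E (LMap E b - t • pφ) - qB E b)
          (by linarith)
        rw [qS_LMap_sub] at hlt
        have h1 : prA m (LMap E b - t • pφ) = prA m (LMap E b) := by
          rw [prA_sub_right, prA_smul_right, hperp m hm]
          ring
        rw [h1] at hlt
        have h2 := hmono m hm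
        rw [qB_sub_expand] at h2
        rw [prA_LMap] at hlt
        linarith
      have hX : prA b pφ = 0 := by
        refine AdjProofAux.zero_of_forall_sq (X := prA b pφ) (Y := qS E pφ) ?_
        intro t
        have := hqt t
        rw [qS_LMap_sub_smul] at this
        linarith
      rw [hpr] at hX
      linarith [hφb]
    · -- type (NI)
      intro p
      have h1 : (⨅ m ∈ (V : Set (BSp E)), (qS E (LMap E m - p) : EReal)) ≤ 0 := by
        by_contra hc
        rw [not_le] at hc
        obtain ⟨z, hz0, hzlt⟩ := exists_between hc
        have hle0 : (⨅ m ∈ (V : Set (BSp E)), (qS E (LMap E m - p) : EReal)) ≤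
            ((qS E (LMap E 0 - p) : ℝ) : EReal) := by
          exact iInf₂_le 0 V.zero_mem
        have hztop : z ≠ ⊤ := ne_top_of_lt (lt_of_lt_of_le hzlt hle0)
        have hzbot : z ≠ ⊥ := ne_bot_of_gt hz0
        have hzr : ((z.toReal : ℝ) : EReal) = z := EReal.coe_toReal hztop hzbot
        have hr0 : (0:ℝ) < z.toReal := by
          rw [← EReal.coe_lt_coe_iff, hzr]
          exact_mod_cast hz0
        obtain ⟨m, hm, hlt⟩ := key_lemma hVmono hA p z.toReal hr0
        have h2 : (⨅ m ∈ (V : Set (BSp E)), (qS E (LMap E m - p) : EReal)) ≤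
            ((qS E (LMap E m - p) : ℝ) : EReal) := iInf₂_le m hm
        have h3 : ((qS E (LMap E m - p) : ℝ) : EReal) < z := by
          rw [← hzr]
          exact_mod_cast hlt
        exact absurd (lt_of_le_of_lt h2 h3) (not_lt.2 hzlt.le)
      show (0 : EReal) ≤ -(⨅ m ∈ (V : Set (BSp E)), (qS E (LMap E m - p) : EReal))
      calc (0 : EReal) = -(0 : EReal) := by simp
        _ ≤ -(⨅ m ∈ (V : Set (BSp E)), (qS E (LMap E m - p) : EReal)) :=
            EReal.neg_le_neg_iff.mpr h1
  · -- easy direction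
    rintro ⟨hmax, hNI⟩
    intro d hd e he
    set w : BStar E := d - e with hwde
    have hw : ∀ m ∈ V, w.1 m.1 = w.2 m.2 := by
      intro m hm
      have h1 := hd m hm
      have h2 := he m hm
      simp only [hwde, Prod.fst_sub, Prod.snd_sub, ContinuousLinearMap.sub_apply]
      linarith
    set σw : BStar E := (w.1, -w.2) with hσw
    have hinf := hNI σw
    have h1 : (⨅ m ∈ (V : Set (BSp E)), (qS E (LMap E m - σw) : EReal)) ≤ 0 := by
      have h2 : -(0:EReal) ≤ -(⨅ m ∈ (V : Set (BSp E)), (qS E (LMap E m - σw) : EReal)) := by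
        simpa [GFn] using hinf
      have := EReal.neg_le_neg_iff.mp h2
      simpa using this
    have h3 : ((qS E σw : ℝ) : EReal) ≤
        (⨅ m ∈ (V : Set (BSp E)), (qS E (LMap E m - σw) : EReal)) := by
      refine le_iInf₂ ?_
      intro m hm
      rw [EReal.coe_le_coe_iff, qS_LMap_sub]
      have hq0 := qB_nonneg_of_monot hVmono hm
      have hpr0 : prA m σw = 0 := by
        have := hw m hm
        simp only [prA, hσw, ContinuousLinearMap.neg_apply]
        linarith
      rw [hpr0]
      linarith
    have h4 : qS E σw ≤ 0 := by
      rw [← EReal.coe_nonpos]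
      exact le_trans h3 h1
    have h5 : qS E σw = -qS E w := by
      simp [hσw, qS]
    have : 0 ≤ qS E w := by linarith [h4, h5.symm.le]
    simpa [hwde] using this
end
end
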